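/- arXiv:1103.2815 — 3 statements merged into one kernel-verified Lean document; each statement's English description precedes it below -/
import Mathlib

section
/- For every Borel probability measure φ on (0,∞) one has ξ̄ ≥ ξ ≥ 0, and consequently Ī(μ) ≥ I(μ) for every μ ∈ P([0,1)×[0,∞)). -/
open MeasureTheory Filter Topology Set ProbabilityTheory
open scoped ENNReal NNReal

noncomputable section

namespace RSP

/-! ### The state space `[0,1) × [0,∞)` -/

/-- Position space `[0,1)`. -/
abbrev Qs : Type := ↥(Ico (0:ℝ) 1)

/-- Momentum space `[0,∞)`. -/
abbrev Ps : Type := ↥(Ici (0:ℝ))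

/-- The state space `[0,1) × [0,∞)`. -/
abbrev Xs : Type := Qs × Ps

def q0X : Qs := ⟨0, by constructor <;> norm_num⟩
def p0X : Ps := ⟨0, by norm_num⟩
def x0X : Xs := (q0X, p0X)

/-- The inclusion of the state space into `ℝ × ℝ`. -/
def ιX : Xs → ℝ × ℝ := fun x => ((x.1 : ℝ), (x.2 : ℝ))

instance : MeasurableSpace (ProbabilityMeasure Xs) := borel _

/-! ### ξ and ξ̄ -/

/-- `ξ := sup {c ∈ ℝ : ∫ e^{c/p} φ(dp) < ∞} ∈ [0,∞]`. -/
def xi (φ : Measure ℝ) : ℝ≥0∞ :=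
  ⨆ (c : ℝ) (_ : ∫⁻ p, ENNReal.ofReal (Real.exp (c / p)) ∂φ < ⊤), ENNReal.ofReal c

/-- Conversion from `EReal` to `ℝ≥0∞` (nonnegative extended reals), clamping below. -/
def erealToENNReal (x : EReal) : ℝ≥0∞ := if x = ⊤ then ⊤ else ENNReal.ofReal x.toReal

/-- `ξ̄ := - lim_{δ↓0} liminf_{ε↓0} ε log φ([ε(1-δ), ε(1+δ))) ∈ [0,∞]`; since the inner
liminf is monotone in `δ`, the limit as `δ ↓ 0` is the infimum over `δ > 0`. -/
def xibar (φ : Measure ℝ) : ℝ≥0∞ :=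
  erealToENNReal (- ⨅ (δ : ℝ) (_ : 0 < δ),
    liminf (fun ε : ℝ => (ε : EReal) * ENNReal.log (φ (Ico (ε*(1-δ)) (ε*(1+δ)))))
      (𝓝[>] (0:ℝ)))

/-! ### Measures on the state space -/

/-- Lebesgue measure `dq` on `[0,1)`. -/
def lebQ : Measure Qs := Measure.comap Subtype.val volume

/-- The measure `λ_ℓ` on `[0,1)`: uniform on `[0,ℓ)` for `ℓ > 0`, and `δ_0` for `ℓ = 0`. -/
def lamQ (ℓ : ℝ) : Measure Qs :=
  if 0 < ℓ then (ENNReal.ofReal ℓ)⁻¹ • Measure.comap Subtype.val (volume.restrict (Ico 0 ℓ))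
  else Measure.dirac q0X

/-- A measure on `ℝ` viewed as a measure on `[0,∞)`. -/
def toPs (π : Measure ℝ) : Measure Ps := Measure.comap Subtype.val π

/-- The Dirac mass `δ_0(dp)` on `[0,∞)`. -/
def diracP0 : Measure Ps := Measure.dirac p0X

/-- First moment `π(p) = ∫ p π(dp)` of a measure on `ℝ` (as an extended real). -/
def moment (π : Measure ℝ) : ℝ≥0∞ := ∫⁻ p, ENNReal.ofReal p ∂π

/-- `π̃(dp) := p π(dp) / π(p)`. -/
def tilted (π : Measure ℝ) : Measure ℝ :=
  (moment π)⁻¹ • π.withDensity (fun p => ENNReal.ofReal p)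

/-- `μ(p) = ∫ p dμ` for a measure on the state space. -/
def muMom (μ : Measure Xs) : ℝ≥0∞ := ∫⁻ x, ENNReal.ofReal ((x.2 : ℝ)) ∂μ

open scoped Classical in
/-- Relative entropy `H(ν|μ) = ∫ log (dν/dμ) dν ∈ [0,∞]` (`= ∞` if `ν` is not
absolutely continuous with respect to `μ`). -/
def relEnt {α : Type*} [MeasurableSpace α] (ν μ : Measure α) : ℝ≥0∞ :=
  if ν ≪ μ then
    (∫⁻ x, ENNReal.ofReal (Real.log ((ν.rnDeriv μ x).toReal)) ∂ν) -
      (∫⁻ x, ENNReal.ofReal (- Real.log ((ν.rnDeriv μ x).toReal)) ∂ν)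
  else ⊤

/-- `μ = α₁ π(dp) dq + α₂ δ_0(dp) dq + α₃ δ_0(dp) λ_ℓ(dq)` with the constraints of the set
`Ω`: `α i ∈ [0,1]`, `α₁+α₂+α₃ = 1`, `π ∈ P((0,∞))` with `π(p) < ∞` and `ℓ ∈ [0,1)`. -/
def ReprData (μ : Measure Xs) (α₁ α₂ α₃ : ℝ) (π : Measure ℝ) (ℓ : ℝ) : Prop :=
  0 ≤ α₁ ∧ 0 ≤ α₂ ∧ 0 ≤ α₃ ∧ α₁ + α₂ + α₃ = 1 ∧ 0 ≤ ℓ ∧ ℓ < 1 ∧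
  IsProbabilityMeasure π ∧ π (Ioi (0:ℝ)) = 1 ∧ moment π < ⊤ ∧
  μ = ENNReal.ofReal α₁ • (lebQ.prod (toPs π)) + ENNReal.ofReal α₂ • (lebQ.prod diracP0)
      + ENNReal.ofReal α₃ • ((lamQ ℓ).prod diracP0)

/-- The set `Ω ⊂ P([0,1) × [0,∞))`. -/
def memOmega (μ : Measure Xs) : Prop := ∃ α₁ α₂ α₃ π ℓ, ReprData μ α₁ α₂ α₃ π ℓ

/-- The rate functional `I`. -/
def Ifun (φ : Measure ℝ) (μ : Measure Xs) : ℝ≥0∞ :=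
  ⨅ (α₁ : ℝ) (α₂ : ℝ) (α₃ : ℝ) (ℓ : ℝ) (π : Measure ℝ) (_ : ReprData μ α₁ α₂ α₃ π ℓ),
    muMom μ * relEnt (tilted π) φ
      + (ENNReal.ofReal α₂ + ENNReal.ofReal α₃ * (ENNReal.ofReal ℓ)⁻¹) * xi φ

/-- The rate functional `Ī`. -/
def Ibarfun (φ : Measure ℝ) (μ : Measure Xs) : ℝ≥0∞ :=
  ⨅ (α₁ : ℝ) (α₂ : ℝ) (α₃ : ℝ) (ℓ : ℝ) (π : Measure ℝ) (_ : ReprData μ α₁ α₂ α₃ π ℓ),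
    muMom μ * relEnt (tilted π) φ
      + ENNReal.ofReal α₂ * xi φ + ENNReal.ofReal α₃ * (ENNReal.ofReal ℓ)⁻¹ * xibar φ

/-! ### The particle process -/

/-- `S_n = τ_1 + ⋯ + τ_n`. -/
def Sn (τ : ℕ → ℝ) (n : ℕ) : ℝ := ∑ i ∈ Finset.range n, τ (i+1)

/-- `N_t = #{n ≥ 1 : S_n ≤ t}`, the number of renewals up to time `t`. -/
def Nt (τ : ℕ → ℝ) (t : ℝ) : ℕ := sSup {n | Sn τ n ≤ t}

/-- The undelayed process `(q̄_t, p̄_t) = ((t - S_{N_t})/τ_{N_t+1}, 1/τ_{N_t+1})`. -/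
def trajU (τ : ℕ → ℝ) (t : ℝ) : ℝ × ℝ :=
  ((t - Sn τ (Nt τ t)) / τ (Nt τ t + 1), (τ (Nt τ t + 1))⁻¹)

/-- `T_0 = (1-q)/p`, the time of the first collision. -/
def T0 (q p : ℝ) : ℝ := (1 - q) / p

/-- `T_n = T_0 + S_n`. -/
def Tn (q p : ℝ) (τ : ℕ → ℝ) (n : ℕ) : ℝ := T0 q p + Sn τ n

/-- The number of collisions with the wall before time `t`. -/
def ncoll (q p : ℝ) (τ : ℕ → ℝ) (t : ℝ) : ℕ := Set.ncard {n : ℕ | Tn q p τ n ≤ t}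

/-- The deterministic flow `F(q,p,t,(τ_n))`: the particle moves at speed `p` until the
first collision time `T_0` (i.e. while `p t < 1 - q`), after which it follows the
undelayed process built from `(τ_n)`, shifted by `T_0`. -/
def Fmap (q p t : ℝ) (τ : ℕ → ℝ) : ℝ × ℝ :=
  if p * t < 1 - q then (q + p * t, p) else trajU τ (t - T0 q p)

/-! ### Empirical measures and their laws -/

/-- The empirical measure `(1/t) ∫_0^t δ_{g(s)} ds` of a trajectory `g`, on `ℝ × ℝ`. -/
def empR (g : ℝ → ℝ × ℝ) (t : ℝ) : Measure (ℝ × ℝ) :=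
  (ENNReal.ofReal t)⁻¹ • Measure.map g (volume.restrict (Ico (0:ℝ) t))

/-- The empirical measure, as a measure on the state space `[0,1) × [0,∞)`. -/
def empX (g : ℝ → ℝ × ℝ) (t : ℝ) : Measure Xs := Measure.comap ιX (empR g t)

open scoped Classical in
/-- Bundle a measure on the state space as a probability measure (junk value if it is
not a probability measure). -/
def toProbX (μ : Measure Xs) : ProbabilityMeasure Xs :=
  if h : IsProbabilityMeasure μ then ⟨μ, h⟩ else ⟨Measure.dirac x0X, by infer_instance⟩

/-- The empirical measure as a probability measure on the state space. -/
def empPM (g : ℝ → ℝ × ℝ) (t : ℝ) : ProbabilityMeasure Xs := toProbX (empX g t)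

/-- The inter-arrival times `τ_n = 1/v_n` associated with speeds `v`. -/
def tauOf {Ω' : Type*} (v : ℕ → Ω' → ℝ) (ω : Ω') : ℕ → ℝ := fun n => (v n ω)⁻¹

/-- The law `P_t^{(q₀,p₀)}` of the empirical measure `μ_t` of the (delayed) process. -/
def lawEmpD {Ω' : Type*} [MeasurableSpace Ω'] (Pr : Measure Ω') (v : ℕ → Ω' → ℝ)
    (q₀ p₀ t : ℝ) : Measure (ProbabilityMeasure Xs) :=
  Measure.map (fun ω => empPM (fun s => Fmap q₀ p₀ s (tauOf v ω)) t) Pr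

/-- The law `P_t` of the empirical measure `μ̄_t` of the undelayed process. -/
def lawEmpU {Ω' : Type*} [MeasurableSpace Ω'] (Pr : Measure Ω') (v : ℕ → Ω' → ℝ)
    (t : ℝ) : Measure (ProbabilityMeasure Xs) :=
  Measure.map (fun ω => empPM (trajU (tauOf v ω)) t) Pr

/-- An i.i.d. sequence of speeds with marginal law `φ`, everywhere positive. -/
def IsIIDSpeeds {Ω' : Type*} [MeasurableSpace Ω'] (Pr : Measure Ω') (v : ℕ → Ω' → ℝ)
    (φ : Measure ℝ) : Prop :=
  iIndepFun v Pr ∧ (∀ i, Measure.map (v i) Pr = φ) ∧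
    ∀ i ω, 0 < v i ω

/-- `φ` is a (Borel) probability measure on `(0,∞)`. -/
def IsLawOnPos (φ : Measure ℝ) : Prop := IsProbabilityMeasure φ ∧ φ (Ioi (0:ℝ)) = 1


/-! ### The class `Λ` of test functions -/

/-- The open box `[0,1) × [0,∞)` inside `ℝ × ℝ`. -/
def boxX : Set (ℝ × ℝ) := Ico (0:ℝ) 1 ×ˢ Ici (0:ℝ)

/-- `f̄(q,v) := (1/q) ∫_0^q f(r,v) dr`. -/
def fbar (f : ℝ × ℝ → ℝ) (q v : ℝ) : ℝ := q⁻¹ * ∫ r in (0:ℝ)..q, f (r, v)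

/-- `C_f := ∫_{(0,∞)} e^{f̄(1,v)/v} φ(dv)`. -/
def Cf (φ : Measure ℝ) (f : ℝ × ℝ → ℝ) : ℝ≥0∞ :=
  ∫⁻ v in Ioi (0:ℝ), ENNReal.ofReal (Real.exp (fbar f 1 v / v)) ∂φ

/-- `D_f := sup_{s>0} ∫_{(0,1/s]} e^{s f̄(sv,v)} φ(dv)`. -/
def Df (φ : Measure ℝ) (f : ℝ × ℝ → ℝ) : ℝ≥0∞ :=
  ⨆ (s : ℝ) (_ : 0 < s), ∫⁻ v in Ioc (0:ℝ) s⁻¹, ENNReal.ofReal (Real.exp (s * fbar f (s*v) v)) ∂φ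

/-- The set `Λ` of bounded lower semicontinuous `f : [0,1) × [0,∞) → ℝ` with `C_f < 1`
and `D_f < ∞`. -/
def memLambda (φ : Measure ℝ) (f : ℝ × ℝ → ℝ) : Prop :=
  (∃ B, ∀ x ∈ boxX, |f x| ≤ B) ∧ LowerSemicontinuousOn f boxX ∧ Cf φ f < 1 ∧ Df φ f < ⊤

/-- The set `Ω̄` of elements of `Ω` admitting a representation with `α₂ = 0` and `ℓ > 0`. -/
def memOmegaBar (μ : Measure Xs) : Prop := ∃ α₁ α₃ π ℓ, ReprData μ α₁ 0 α₃ π ℓ ∧ 0 < ℓ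

open scoped Classical in
/-- The measure `γ(dq,dp)`: normalized `p⁻¹ φ(dp) dq` if `∫ p⁻¹ φ(dp) < ∞`, and
`δ_0(dp) dq` otherwise. -/
def gammaMeas (φ : Measure ℝ) : Measure Xs :=
  if (∫⁻ p, ENNReal.ofReal p⁻¹ ∂φ) < ⊤ then
    lebQ.prod (toPs ((∫⁻ p, ENNReal.ofReal p⁻¹ ∂φ)⁻¹ •
      φ.withDensity (fun p => ENNReal.ofReal p⁻¹)))
  else lebQ.prod diracP0

/-! ### The semigroup and its generator -/

/-- The closed box `[0,1] × [0,∞)`. -/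
def box1 : Set (ℝ × ℝ) := Icc (0:ℝ) 1 ×ˢ Ici (0:ℝ)

/-- The semigroup `P_t f (q,p) = E[f(F(q,p,t,(τ_n)))]`. -/
def Pop {Ω' : Type*} [MeasurableSpace Ω'] (Pr : Measure Ω') (v : ℕ → Ω' → ℝ)
    (f : ℝ × ℝ → ℝ) (t : ℝ) (x : ℝ × ℝ) : ℝ :=
  ∫ ω, f (Fmap x.1 x.2 t (tauOf v ω)) ∂Pr

/-- `g` is a bounded continuous function on `[0,1] × [0,∞)` such that
`P_t f = f + ∫_0^t P_s g ds` there; that is, `g` witnesses `f ∈ D(L)` with `L f = g`. -/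
def IsGenWitness {Ω' : Type*} [MeasurableSpace Ω'] (Pr : Measure Ω') (v : ℕ → Ω' → ℝ)
    (f g : ℝ × ℝ → ℝ) : Prop :=
  ContinuousOn g box1 ∧ (∃ B, ∀ x ∈ box1, |g x| ≤ B) ∧
    ∀ t ≥ (0:ℝ), ∀ x ∈ box1, Pop Pr v f t x = f x + ∫ s in (0:ℝ)..t, Pop Pr v g s x

/-- The candidate generator `(q,p) ↦ p ∂f/∂q (q,p)` (with the one-sided derivative in
`q ∈ [0,1]`). -/
def genForm (f : ℝ × ℝ → ℝ) : ℝ × ℝ → ℝ :=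
  fun x => x.2 * derivWithin (fun q => f (q, x.2)) (Icc (0:ℝ) 1) x.1


/-- Multiplying an `EReal` inequality by a positive real on the left. -/
lemma ereal_mul_le_aux {ε r : ℝ} (hε : 0 < ε) {x : EReal} (hx : x ≤ (r : EReal)) :
    (ε : EReal) * x ≤ ((ε * r : ℝ) : EReal) := by
  induction x with
  | bot => rw [EReal.coe_mul_bot_of_pos hε]; exact bot_le
  | coe y =>
      rw [← EReal.coe_mul]
      exact EReal.coe_le_coe_iff.2
        (mul_le_mul_of_nonneg_left (EReal.coe_le_coe_iff.1 hx) hε.le)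
  | top => exact absurd hx (by simp)

/-- Chebyshev-type estimate: for a probability measure concentrated on `(0,∞)`,
`φ([a,b)) ≤ e^{-c/b} ∫ e^{c/p} φ(dp)`. -/
lemma cheb_aux (φ : Measure ℝ) [IsProbabilityMeasure φ] (hpos : φ (Ioi (0:ℝ)) = 1)
    {c b : ℝ} (hc : 0 < c) (hb : 0 < b) (a : ℝ) :
    φ (Ico a b) ≤ (∫⁻ p, ENNReal.ofReal (Real.exp (c / p)) ∂φ)
      * ENNReal.ofReal (Real.exp (-(c / b))) := by
  set M := ∫⁻ p, ENNReal.ofReal (Real.exp (c / p)) ∂φ with hMdef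
  have hcompl : φ ((Ioi (0:ℝ))ᶜ) = 0 := by
    rw [measure_compl measurableSet_Ioi (measure_ne_top φ _), hpos, measure_univ, tsub_self]
  have h1 : φ (Ico a b) ≤ φ (Ico a b ∩ Ioi 0) := by
    calc φ (Ico a b) ≤ φ ((Ico a b ∩ Ioi 0) ∪ (Ioi (0:ℝ))ᶜ) := by
          apply measure_mono; intro x hx
          by_cases h : x ∈ Ioi (0:ℝ)
          · exact Or.inl ⟨hx, h⟩
          · exact Or.inr h
      _ ≤ φ (Ico a b ∩ Ioi 0) + φ ((Ioi (0:ℝ))ᶜ) := measure_union_le _ _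
      _ = φ (Ico a b ∩ Ioi 0) := by rw [hcompl, add_zero]
  have hs : MeasurableSet (Ico a b ∩ Ioi (0:ℝ)) := measurableSet_Ico.inter measurableSet_Ioi
  have h2 : ENNReal.ofReal (Real.exp (c / b)) * φ (Ico a b ∩ Ioi 0) ≤ M := by
    calc ENNReal.ofReal (Real.exp (c / b)) * φ (Ico a b ∩ Ioi 0)
        = ∫⁻ _ in Ico a b ∩ Ioi 0, ENNReal.ofReal (Real.exp (c / b)) ∂φ := by
          rw [setLIntegral_const]
      _ ≤ ∫⁻ p in Ico a b ∩ Ioi 0, ENNReal.ofReal (Real.exp (c / p)) ∂φ := by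
          refine setLIntegral_mono' hs fun x hx => ?_
          have hx0 : (0:ℝ) < x := hx.2
          have hxb : x ≤ b := hx.1.2.le
          refine ENNReal.ofReal_le_ofReal (Real.exp_le_exp.2 ?_)
          gcongr
      _ ≤ M := setLIntegral_le_lintegral _ _
  have hk0 : ENNReal.ofReal (Real.exp (c / b)) ≠ 0 := by
    simp [ENNReal.ofReal_eq_zero, not_le, Real.exp_pos]
  have hkt : ENNReal.ofReal (Real.exp (c / b)) ≠ ⊤ := ENNReal.ofReal_ne_top
  have h3 : φ (Ico a b ∩ Ioi 0) ≤ M / ENNReal.ofReal (Real.exp (c / b)) :=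
    (ENNReal.le_div_iff_mul_le (Or.inl hk0) (Or.inl hkt)).2 (by rwa [mul_comm])
  refine h1.trans (h3.trans_eq ?_)
  rw [div_eq_mul_inv, ← ENNReal.ofReal_inv_of_pos (Real.exp_pos _), ← Real.exp_neg]

/-- For every Borel probability measure `φ` on `(0,∞)` one has
`ξ̄ ≥ ξ ≥ 0`, and consequently `Ī(μ) ≥ I(μ)` for every `μ ∈ P([0,1) × [0,∞))`. -/
theorem xi_le_xibar_and_Ifun_le_Ibarfun (φ : Measure ℝ) (hφ : IsLawOnPos φ) :
    xi φ ≤ xibar φ ∧ ∀ μ : ProbabilityMeasure Xs, Ifun φ ↑μ ≤ Ibarfun φ ↑μ := by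
  obtain ⟨hprob, hpos⟩ := hφ
  have hxx : xi φ ≤ xibar φ := by
    refine iSup_le fun c => iSup_le fun hM => ?_
    rcases le_or_gt c 0 with hc | hc
    · simpa [ENNReal.ofReal_eq_zero.2 hc] using zero_le _
    set M := ∫⁻ p, ENNReal.ofReal (Real.exp (c / p)) ∂φ with hMdef
    set K := max M.toReal 1 with hKdef
    have hK1 : (1:ℝ) ≤ K := le_max_right _ _
    have hK0 : (0:ℝ) < K := lt_of_lt_of_le one_pos hK1
    have hMK : M ≤ ENNReal.ofReal K := by
      rw [← ENNReal.ofReal_toReal hM.ne]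
      exact ENNReal.ofReal_le_ofReal (le_max_left _ _)
    have key : ∀ δ : ℝ, 0 < δ →
        liminf (fun ε : ℝ => (ε : EReal) * ENNReal.log (φ (Ico (ε*(1-δ)) (ε*(1+δ)))))
          (𝓝[>] (0:ℝ)) ≤ ((-(c/(1+δ)) : ℝ) : EReal) := by
      intro δ hδ
      have h1δ : (0:ℝ) < 1 + δ := by linarith
      have hbd : ∀ᶠ (ε : ℝ) in 𝓝[>] (0:ℝ),
          (ε : EReal) * ENNReal.log (φ (Ico (ε*(1-δ)) (ε*(1+δ))))
            ≤ ((ε * Real.log K + -(c/(1+δ)) : ℝ) : EReal) := by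
        filter_upwards [self_mem_nhdsWithin] with ε (hε : 0 < ε)
        have hb : 0 < ε * (1+δ) := mul_pos hε h1δ
        have hφle : φ (Ico (ε*(1-δ)) (ε*(1+δ)))
            ≤ ENNReal.ofReal (K * Real.exp (-(c/(ε*(1+δ))))) := by
          calc φ (Ico (ε*(1-δ)) (ε*(1+δ)))
              ≤ M * ENNReal.ofReal (Real.exp (-(c/(ε*(1+δ))))) := cheb_aux φ hpos hc hb _
            _ ≤ ENNReal.ofReal K * ENNReal.ofReal (Real.exp (-(c/(ε*(1+δ))))) :=
                mul_le_mul_left hMK _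
            _ = ENNReal.ofReal (K * Real.exp (-(c/(ε*(1+δ))))) :=
                (ENNReal.ofReal_mul hK0.le).symm
        have hlog : ENNReal.log (φ (Ico (ε*(1-δ)) (ε*(1+δ))))
            ≤ ((Real.log K + -(c/(ε*(1+δ))) : ℝ) : EReal) := by
          refine (ENNReal.log_monotone hφle).trans_eq ?_
          rw [ENNReal.log_ofReal_of_pos (mul_pos hK0 (Real.exp_pos _)),
            Real.log_mul hK0.ne' (Real.exp_ne_zero _), Real.log_exp]
        refine (ereal_mul_le_aux hε hlog).trans_eq ?_
        refine EReal.coe_eq_coe_iff.2 ?_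
        field_simp
      have hlim : Tendsto (fun ε : ℝ => ((ε * Real.log K + -(c/(1+δ)) : ℝ) : EReal))
          (𝓝[>] (0:ℝ)) (𝓝 ((-(c/(1+δ)) : ℝ) : EReal)) := by
        rw [EReal.tendsto_coe]
        have h0 : Tendsto (fun ε : ℝ => ε * Real.log K + -(c/(1+δ))) (𝓝 (0:ℝ))
            (𝓝 (0 * Real.log K + -(c/(1+δ)))) :=
          ((continuous_id.mul continuous_const).add continuous_const).tendsto 0
        rw [zero_mul, zero_add] at h0
        exact h0.mono_left nhdsWithin_le_nhds
      calc liminf (fun ε : ℝ => (ε : EReal) * ENNReal.log (φ (Ico (ε*(1-δ)) (ε*(1+δ)))))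
            (𝓝[>] (0:ℝ))
          ≤ liminf (fun ε : ℝ => ((ε * Real.log K + -(c/(1+δ)) : ℝ) : EReal)) (𝓝[>] (0:ℝ)) :=
            liminf_le_liminf hbd
        _ = ((-(c/(1+δ)) : ℝ) : EReal) := hlim.liminf_eq
    unfold xibar
    set J := ⨅ (δ : ℝ) (_ : 0 < δ),
      liminf (fun ε : ℝ => (ε : EReal) * ENNReal.log (φ (Ico (ε*(1-δ)) (ε*(1+δ)))))
        (𝓝[>] (0:ℝ)) with hJdef
    have hJle : ∀ δ : ℝ, 0 < δ → J ≤ ((-(c/(1+δ)) : ℝ) : EReal) := fun δ hδ =>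
      (iInf₂_le δ hδ).trans (key δ hδ)
    by_cases hbot : J = ⊥
    · simp [erealToENNReal, hbot, EReal.neg_bot]
    · have hJtop : J ≠ ⊤ := by
        intro h
        have := hJle 1 one_pos
        rw [h] at this
        exact (this.trans_lt (EReal.coe_lt_top _)).false
      have hJr : c ≤ -(J.toReal) := by
        have hall : ∀ δ : ℝ, 0 < δ → c/(1+δ) ≤ -J.toReal := by
          intro δ hδ
          have h := EReal.toReal_le_toReal (hJle δ hδ) hbot (EReal.coe_ne_top _)
          rw [EReal.toReal_coe] at h
          linarith
        have htend : Tendsto (fun δ : ℝ => c/(1+δ)) (𝓝[>] (0:ℝ)) (𝓝 c) := by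
          have h0 : Tendsto (fun δ : ℝ => c/(1+δ)) (𝓝 (0:ℝ)) (𝓝 (c/(1+0))) :=
            tendsto_const_nhds.div
              (tendsto_const_nhds.add tendsto_id) (by norm_num)
          rw [add_zero, div_one] at h0
          exact h0.mono_left nhdsWithin_le_nhds
        exact le_of_tendsto htend (eventually_nhdsWithin_of_forall hall)
      show ENNReal.ofReal c ≤ erealToENNReal (-J)
      simp only [erealToENNReal]
      rw [if_neg (fun h => hbot (EReal.neg_eq_top_iff.1 h)), EReal.toReal_neg_eq]
      exact ENNReal.ofReal_le_ofReal hJr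
  refine ⟨hxx, fun μ => ?_⟩
  unfold Ifun Ibarfun
  refine iInf_mono fun α₁ => iInf_mono fun α₂ => iInf_mono fun α₃ => iInf_mono fun ℓ =>
    iInf_mono fun π => iInf_mono fun h => ?_
  rw [add_mul, ← add_assoc]
  gcongr

end RSP
end
end

section
/- Let Z := Σ_{j≥0} e^{−2^j} and φ := Z^{-1} Σ_{j≥0} e^{−2^j} δ_{2^{−j}}, a probability measure on (0,∞). Then ξ = 1 and ξ̄ = +∞. In particular the inequality ξ̄ ≥ ξ can be strict. -/
open MeasureTheory Filter Topology Set ProbabilityTheory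
open scoped ENNReal NNReal

noncomputable section

namespace RSP

/-! ### Auxiliary lemmas for the example -/

/-- The normalizing constant. -/
def Zc : ℝ := ∑' j : ℕ, Real.exp (-(2 ^ j : ℝ))

/-- The example measure. -/
def phiEx : Measure ℝ := (ENNReal.ofReal Zc)⁻¹ •
  Measure.sum (fun j : ℕ =>
    ENNReal.ofReal (Real.exp (-(2 ^ j : ℝ))) • Measure.dirac (((2:ℝ) ^ j)⁻¹))

lemma summable_exp_mul_two_pow {r : ℝ} (hr : r < 0) :
    Summable (fun j : ℕ => Real.exp (r * 2 ^ j)) := by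
  refine Summable.of_nonneg_of_le (fun j => (Real.exp_pos _).le) (fun j => ?_)
    (summable_geometric_of_lt_one (Real.exp_pos r).le (Real.exp_lt_one_iff.2 hr))
  rw [← Real.exp_nat_mul, mul_comm (j:ℝ) r]
  apply Real.exp_le_exp.2
  have h2 : (j : ℝ) ≤ (2:ℝ) ^ j := by
    exact_mod_cast (Nat.lt_two_pow_self (n := j)).le
  nlinarith

lemma summable_Zc : Summable (fun j : ℕ => Real.exp (-(2 ^ j : ℝ))) := by
  simpa [neg_one_mul] using summable_exp_mul_two_pow (r := -1) (by norm_num)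

lemma Zc_pos : 0 < Zc :=
  Summable.tsum_pos summable_Zc (fun j => (Real.exp_pos _).le) 0 (Real.exp_pos _)

lemma ofReal_Zc_ne_zero : ENNReal.ofReal Zc ≠ 0 := by
  simp [ENNReal.ofReal_eq_zero, not_le, Zc_pos]

lemma inv_ofReal_Zc_lt_top : (ENNReal.ofReal Zc)⁻¹ < ⊤ :=
  ENNReal.inv_lt_top.2 (by simpa [pos_iff_ne_zero] using ofReal_Zc_ne_zero)

lemma lintegral_phiEx (f : ℝ → ℝ≥0∞) :
    ∫⁻ p, f p ∂phiEx = (ENNReal.ofReal Zc)⁻¹ *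
      ∑' j : ℕ, ENNReal.ofReal (Real.exp (-(2 ^ j : ℝ))) * f (((2:ℝ) ^ j)⁻¹) := by
  rw [phiEx, lintegral_smul_measure, lintegral_sum_measure]
  congr 1
  refine tsum_congr fun j => ?_
  rw [lintegral_smul_measure, lintegral_dirac, smul_eq_mul]

lemma term_eq (c : ℝ) (j : ℕ) :
    ENNReal.ofReal (Real.exp (-(2 ^ j : ℝ))) *
      ENNReal.ofReal (Real.exp (c / ((2:ℝ) ^ j)⁻¹)) =
    ENNReal.ofReal (Real.exp ((c - 1) * 2 ^ j)) := by
  rw [← ENNReal.ofReal_mul (Real.exp_pos _).le, ← Real.exp_add]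
  congr 1
  have h : c / ((2:ℝ) ^ j)⁻¹ = c * 2 ^ j := by field_simp
  rw [h]; ring

lemma integral_phiEx_eq (c : ℝ) :
    ∫⁻ p, ENNReal.ofReal (Real.exp (c / p)) ∂phiEx =
      (ENNReal.ofReal Zc)⁻¹ * ∑' j : ℕ, ENNReal.ofReal (Real.exp ((c - 1) * 2 ^ j)) := by
  rw [lintegral_phiEx]
  congr 1
  exact tsum_congr fun j => term_eq c j

lemma integral_phiEx_lt_top {c : ℝ} (hc : c < 1) :
    ∫⁻ p, ENNReal.ofReal (Real.exp (c / p)) ∂phiEx < ⊤ := by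
  rw [integral_phiEx_eq]
  refine ENNReal.mul_lt_top inv_ofReal_Zc_lt_top ?_
  have hsum : Summable (fun j : ℕ => Real.exp ((c - 1) * 2 ^ j)) :=
    summable_exp_mul_two_pow (by linarith)
  rw [← ENNReal.ofReal_tsum_of_nonneg (fun j => (Real.exp_pos _).le) hsum]
  exact ENNReal.ofReal_lt_top

lemma integral_phiEx_eq_top {c : ℝ} (hc : 1 < c) :
    ∫⁻ p, ENNReal.ofReal (Real.exp (c / p)) ∂phiEx = ⊤ := by
  rw [integral_phiEx_eq]
  have hsum : ∑' j : ℕ, ENNReal.ofReal (Real.exp ((c - 1) * 2 ^ j)) = ⊤ := by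
    refine top_le_iff.1 ?_
    calc (⊤ : ℝ≥0∞) = ∑' _ : ℕ, (1 : ℝ≥0∞) :=
          (ENNReal.tsum_const_eq_top_of_ne_zero one_ne_zero).symm
      _ ≤ _ := by
          refine ENNReal.tsum_le_tsum fun j => ?_
          rw [ENNReal.one_le_ofReal, Real.one_le_exp_iff]
          have hc0 : (0:ℝ) ≤ c - 1 := by linarith
          positivity
  rw [hsum, ENNReal.mul_top (ENNReal.inv_ne_zero.2 ENNReal.ofReal_ne_top)]

lemma xi_phiEx : xi phiEx = 1 := by
  apply le_antisymm
  · refine iSup₂_le fun c hc => ?_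
    rcases le_or_gt c 1 with h | h
    · calc ENNReal.ofReal c ≤ ENNReal.ofReal 1 := ENNReal.ofReal_le_ofReal h
        _ = 1 := ENNReal.ofReal_one
    · exact absurd hc (by rw [integral_phiEx_eq_top h]; exact lt_irrefl _)
  · by_contra h
    push_neg at h
    have hne : xi phiEx ≠ ⊤ := fun ht => by simp [ht] at h
    set t := (xi phiEx).toReal with htdef
    have ht0 : 0 ≤ t := ENNReal.toReal_nonneg
    have ht1 : t < 1 := by
      rw [htdef, ← ENNReal.toReal_one]
      exact ENNReal.toReal_strict_mono ENNReal.one_ne_top h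
    set c : ℝ := (t + 1) / 2 with hcdef
    have hc1 : c < 1 := by rw [hcdef]; linarith
    have hle : ENNReal.ofReal c ≤ xi phiEx :=
      le_iSup₂ (f := fun (c : ℝ) (_ : ∫⁻ p, ENNReal.ofReal (Real.exp (c / p)) ∂phiEx < ⊤)
        => ENNReal.ofReal c) c (integral_phiEx_lt_top hc1)
    have hgt : xi phiEx < ENNReal.ofReal c := by
      rw [← ENNReal.ofReal_toReal hne, ← htdef]
      rw [ENNReal.ofReal_lt_ofReal_iff (by rw [hcdef]; linarith)]
      rw [hcdef]; linarith
    exact absurd hle (not_le.2 hgt)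

lemma phiEx_interval_zero (k : ℕ) :
    phiEx (Ico ((3/4 * ((2:ℝ))⁻¹ ^ k) * (1 - 1/4)) ((3/4 * ((2:ℝ))⁻¹ ^ k) * (1 + 1/4))) = 0 := by
  have hms : MeasurableSet (Ico ((3/4 * ((2:ℝ))⁻¹ ^ k) * (1 - 1/4))
      ((3/4 * ((2:ℝ))⁻¹ ^ k) * (1 + 1/4))) := measurableSet_Ico
  rw [phiEx, Measure.smul_apply, Measure.sum_apply _ hms]
  have hterm : ∀ j : ℕ, (ENNReal.ofReal (Real.exp (-(2 ^ j : ℝ))) •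
      Measure.dirac (((2:ℝ) ^ j)⁻¹)) (Ico ((3/4 * ((2:ℝ))⁻¹ ^ k) * (1 - 1/4))
        ((3/4 * ((2:ℝ))⁻¹ ^ k) * (1 + 1/4))) = 0 := by
    intro j
    rw [Measure.smul_apply, Measure.dirac_apply' _ hms]
    have hnot : ((2:ℝ) ^ j)⁻¹ ∉ Ico ((3/4 * ((2:ℝ))⁻¹ ^ k) * (1 - 1/4))
        ((3/4 * ((2:ℝ))⁻¹ ^ k) * (1 + 1/4)) := by
      rintro ⟨h1, h2⟩
      rw [inv_pow] at h1 h2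
      rcases le_or_gt j k with hjk | hjk
      · -- 2^{-j} ≥ 2^{-k} > (15/16) 2^{-k}
        have hmono : ((2:ℝ) ^ k)⁻¹ ≤ ((2:ℝ) ^ j)⁻¹ := by
          apply inv_anti₀ (by positivity)
          exact pow_le_pow_right₀ (by norm_num) hjk
        have hkpos : (0:ℝ) < ((2:ℝ) ^ k)⁻¹ := by positivity
        nlinarith
      · -- 2^{-j} ≤ 2^{-k-1} < (9/16) 2^{-k}
        have hmono : ((2:ℝ) ^ j)⁻¹ ≤ ((2:ℝ) ^ (k+1))⁻¹ := by
          apply inv_anti₀ (by positivity)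
          exact pow_le_pow_right₀ (by norm_num) hjk
        have h21 : ((2:ℝ) ^ (k+1))⁻¹ = ((2:ℝ) ^ k)⁻¹ / 2 := by
          rw [pow_succ]; field_simp
        have hkpos : (0:ℝ) < ((2:ℝ) ^ k)⁻¹ := by positivity
        nlinarith
    simp only [Set.indicator_of_notMem hnot, smul_zero]
  rw [tsum_congr hterm]
  simp

lemma xibar_phiEx : xibar phiEx = ⊤ := by
  have hinf : (⨅ (δ : ℝ) (_ : 0 < δ),
      liminf (fun ε : ℝ => (ε : EReal) *
        ENNReal.log (phiEx (Ico (ε*(1-δ)) (ε*(1+δ))))) (𝓝[>] (0:ℝ))) = ⊥ := by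
    refine le_bot_iff.1 ?_
    refine le_trans (iInf₂_le (1/4 : ℝ) (by norm_num)) ?_
    refine liminf_le_of_frequently_le' ?_
    have htend : Tendsto (fun k : ℕ => (3/4 : ℝ) * ((2:ℝ))⁻¹ ^ k) atTop (𝓝[>] (0:ℝ)) := by
      rw [tendsto_nhdsWithin_iff]
      constructor
      · have : Tendsto (fun k : ℕ => ((2:ℝ))⁻¹ ^ k) atTop (𝓝 0) :=
          tendsto_pow_atTop_nhds_zero_of_lt_one (by norm_num) (by norm_num)
        simpa using this.const_mul (3/4 : ℝ)
      · exact Eventually.of_forall fun k => Set.mem_Ioi.2 (by positivity)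
    refine htend.frequently (Frequently.of_forall fun k => ?_)
    rw [phiEx_interval_zero k, ENNReal.log_zero]
    have hp : (0:ℝ) < 3/4 * ((2:ℝ))⁻¹ ^ k := by positivity
    rw [EReal.mul_bot_of_pos (by exact_mod_cast hp)]
  rw [xibar, hinf]
  simp [erealToENNReal]

/-- For `φ := Z⁻¹ ∑_{j ≥ 0} e^{-2^j} δ_{2^{-j}}` one has `ξ = 1` and
`ξ̄ = +∞`; in particular the inequality `ξ̄ ≥ ξ` can be strict. -/
theorem xi_eq_one_and_xibar_eq_top_of_example :
    let Z : ℝ := ∑' j : ℕ, Real.exp (-(2 ^ j : ℝ))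
    let φ : Measure ℝ := (ENNReal.ofReal Z)⁻¹ •
      Measure.sum (fun j : ℕ =>
        ENNReal.ofReal (Real.exp (-(2 ^ j : ℝ))) • Measure.dirac (((2:ℝ) ^ j)⁻¹))
    xi φ = 1 ∧ xibar φ = ⊤ ∧ xi φ < xibar φ := by
  intro Z φ
  have hZ : Z = Zc := rfl
  have hphi : φ = phiEx := by rw [phiEx, ← hZ]
  rw [hphi]
  refine ⟨xi_phiEx, xibar_phiEx, ?_⟩
  rw [xi_phiEx, xibar_phiEx]
  exact ENNReal.one_lt_top

end RSP
end
end

section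
/- Say a bounded continuous f : [0,1]×[0,∞) → ℝ belongs to D(L) if there is a bounded continuous Lf : [0,1]×[0,∞) → ℝ with P_t f(q,p) = f(q,p) + ∫_0^t P_s Lf(q,p) ds for all t ≥ 0 and all (q,p). Then f ∈ D(L) if and only if f is bounded continuous, (q,p) ↦ p·∂f/∂q(q,p) is bounded continuous, and f satisfies the boundary condition f(1,p) = ∫_{(0,∞)} f(0,1/τ) ψ(dτ) for all p ∈ [0,∞); in that case Lf(q,p) = p·∂f/∂q(q,p). -/
set_option linter.unusedSectionVars false
set_option maxHeartbeats 1000000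


open MeasureTheory Filter Topology Set ProbabilityTheory
open scoped ENNReal NNReal

noncomputable section

namespace RSP

section A
variable {τ : ℕ → ℝ} (hpos : ∀ n, 0 < τ n)
include hpos

lemma Sn_succ (n : ℕ) : Sn τ (n+1) = Sn τ n + τ (n+1) := Finset.sum_range_succ _ _

lemma Sn_strictMono : StrictMono (Sn τ) := by
  apply strictMono_nat_of_lt_succ
  intro n
  rw [Sn_succ hpos]
  linarith [hpos (n+1)]

lemma Sn_zero : Sn τ 0 = 0 := rfl

lemma Sn_nonneg (n : ℕ) : 0 ≤ Sn τ n := by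
  have := (Sn_strictMono hpos).monotone (Nat.zero_le n)
  rwa [Sn_zero hpos] at this

lemma Sn_pos (n : ℕ) (hn : 0 < n) : 0 < Sn τ n := by
  have := Sn_strictMono hpos hn
  rwa [Sn_zero hpos] at this

variable (hS : Tendsto (Sn τ) atTop atTop)
include hS

lemma Nt_bddAbove (t : ℝ) : BddAbove {n | Sn τ n ≤ t} := by
  obtain ⟨m, hm⟩ := (tendsto_atTop.1 hS (t+1)).exists_forall_of_atTop
  refine ⟨m, fun k hk => ?_⟩
  by_contra hkm
  push_neg at hkm
  have := hm k hkm.le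
  simp only [mem_setOf_eq] at hk
  linarith

lemma Nt_le {t : ℝ} (ht : 0 ≤ t) : Sn τ (Nt τ t) ≤ t := by
  have h0 : (0:ℕ) ∈ {n | Sn τ n ≤ t} := by simp [Sn_zero hpos, ht]
  have := Nat.sSup_mem ⟨0, h0⟩ (Nt_bddAbove hpos hS t)
  exact this

lemma Nt_lt_succ (t : ℝ) : t < Sn τ (Nt τ t + 1) := by
  by_contra h
  push_neg at h
  have hmem : (Nt τ t + 1) ∈ {n | Sn τ n ≤ t} := h
  have := le_csSup (Nt_bddAbove hpos hS t) hmem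
  simp only [Nt] at this ⊢
  omega

lemma Nt_eq {t : ℝ} {n : ℕ} (h1 : Sn τ n ≤ t ∨ n = 0) (h2 : t < Sn τ (n+1)) :
    Nt τ t = n := by
  rcases le_or_gt 0 t with ht | ht
  · rcases h1 with h1 | rfl
    · -- set = {0..n}
      have hle : n ≤ Nt τ t := le_csSup (Nt_bddAbove hpos hS t) h1
      have hlt : Nt τ t < n + 1 := by
        by_contra h
        push_neg at h
        have := (Sn_strictMono hpos).monotone h
        have := Nt_le hpos hS ht
        linarith
      omega
    · have hlt : Nt τ t < 1 := by
        by_contra h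
        push_neg at h
        have := (Sn_strictMono hpos).monotone h
        have := Nt_le hpos hS ht
        simp only [zero_add] at h2
        linarith
      omega
  · have hempty : {n | Sn τ n ≤ t} = ∅ := by
      ext k
      simp only [mem_setOf_eq, mem_empty_iff_false, iff_false, not_le]
      exact lt_of_lt_of_le ht (Sn_nonneg hpos k)
    have hn0 : n = 0 := by
      rcases h1 with h1 | rfl
      · exfalso; linarith [Sn_nonneg hpos n]
      · rfl
    simp [Nt, hempty, csSup_empty, hn0]

lemma trajU_eq {u : ℝ} {n : ℕ} (h1 : Sn τ n ≤ u ∨ n = 0) (h2 : u < Sn τ (n+1)) :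
    trajU τ u = ((u - Sn τ n) / τ (n+1), (τ (n+1))⁻¹) := by
  rw [trajU, Nt_eq hpos hS h1 h2]

lemma trajU_mem {u : ℝ} (hu : 0 ≤ u) :
    (trajU τ u).1 ∈ Ico (0:ℝ) 1 ∧ 0 < (trajU τ u).2 := by
  have h1 := Nt_le hpos hS hu
  have h2 := Nt_lt_succ hpos hS u
  rw [Sn_succ hpos] at h2
  set n := Nt τ u
  have hτ := hpos (n+1)
  refine ⟨⟨div_nonneg (by linarith) hτ.le, ?_⟩, inv_pos.2 hτ⟩
  show (u - Sn τ n) / τ (n+1) < 1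
  rw [div_lt_one hτ]; linarith

lemma T0_nonneg {q p : ℝ} (hq : q ≤ 1) (hp : 0 ≤ p) : 0 ≤ T0 q p :=
  div_nonneg (by linarith) hp

lemma Fmap_else {q p t : ℝ} (hqp : (q,p) ∈ box1) (h : ¬ p * t < 1 - q) (ht : 0 ≤ t) :
    0 ≤ t - T0 q p := by
  obtain ⟨⟨hq0, hq1⟩, hp⟩ := hqp
  simp only [mem_Ici] at hp
  rcases eq_or_lt_of_le hp with hp0 | hp0
  · -- p = 0; then ¬ (0 < 1 - q) so q = 1, T0 = 0
    have : ¬ (0:ℝ) < 1 - q := by simpa [← hp0] using h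
    have hq : q = 1 := le_antisymm hq1 (by linarith)
    simp [T0, hq, ht]
  · have : 1 - q ≤ p * t := not_lt.1 h
    have : T0 q p ≤ t := by
      rw [T0, div_le_iff₀ hp0]; linarith [mul_comm p t ▸ this]
    linarith

lemma Fmap_mem {q p t : ℝ} (hqp : (q,p) ∈ box1) (ht : 0 ≤ t) :
    Fmap q p t τ ∈ box1 ∧ ((Fmap q p t τ).1 < 1 ∨ 0 < (Fmap q p t τ).2) := by
  obtain ⟨⟨hq0, hq1⟩, hp⟩ := hqp
  simp only [mem_Ici] at hp
  rw [Fmap]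
  split_ifs with h
  · have hpt : 0 ≤ p * t := mul_nonneg hp ht
    refine ⟨⟨⟨by simpa using by linarith, by simpa using by linarith⟩, by simpa using hp⟩, ?_⟩
    left; simpa using by linarith
  · have hu : 0 ≤ t - T0 q p := Fmap_else hpos hS ⟨⟨hq0, hq1⟩, hp⟩ h ht
    obtain ⟨hq', hp'⟩ := trajU_mem hpos hS hu
    exact ⟨⟨⟨hq'.1, hq'.2.le⟩, hp'.le⟩, Or.inr hp'⟩

end A
/-! Group B : probabilistic machinery -/

section B
variable {Ω' : Type} [MeasurableSpace Ω'] {Pr : Measure Ω'} [IsProbabilityMeasure Pr]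
  {φ : Measure ℝ} {v w : ℕ → Ω' → ℝ}

lemma integrable_of_bounded_meas {g : Ω' → ℝ} (hg : AEStronglyMeasurable g Pr) (C : ℝ)
    (h : ∀ᵐ ω ∂Pr, |g ω| ≤ C) : Integrable g Pr :=
  Integrable.mono' (integrable_const C) hg (by simpa [Real.norm_eq_abs] using h)

lemma iIndepFun_ae_congr (hind : iIndepFun v Pr)
    (h : ∀ i, v i =ᵐ[Pr] w i) : iIndepFun w Pr := by
  rw [iIndepFun_iff_measure_inter_preimage_eq_mul] at hind ⊢
  intro S sets hsets
  have hall : ∀ᵐ ω ∂Pr, ∀ i, v i ω = w i ω := ae_all_iff.2 h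
  have h1 : Pr (⋂ i ∈ S, w i ⁻¹' sets i) = Pr (⋂ i ∈ S, v i ⁻¹' sets i) := by
    apply measure_congr
    filter_upwards [hall] with ω hω
    show (ω ∈ ⋂ i ∈ S, w i ⁻¹' sets i) = (ω ∈ ⋂ i ∈ S, v i ⁻¹' sets i)
    simp only [mem_iInter, mem_preimage, eq_iff_iff]
    constructor <;> intro hh j hj
    · rw [hω j]; exact hh j hj
    · rw [← hω j]; exact hh j hj
  have h2 : ∀ j, Pr (w j ⁻¹' sets j) = Pr (v j ⁻¹' sets j) := by
    intro j
    apply measure_congr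
    filter_upwards [h j] with ω hω
    show (ω ∈ w j ⁻¹' sets j) = (ω ∈ v j ⁻¹' sets j)
    simp only [mem_preimage, hω, eq_iff_iff]
  rw [h1, hind S hsets]
  exact (Finset.prod_congr rfl fun j _ => (h2 j).symm)

lemma exists_nice_version [IsProbabilityMeasure φ]
    (hind : iIndepFun v Pr)
    (hmap : ∀ i, Measure.map (v i) Pr = φ) (hpos : ∀ i ω, 0 < v i ω) :
    ∃ w : ℕ → Ω' → ℝ, (∀ i, Measurable (w i)) ∧ (∀ i ω, 0 < w i ω) ∧
      (∀ i, Measure.map (w i) Pr = φ) ∧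
      iIndepFun w Pr ∧
      ∀ᵐ ω ∂Pr, ∀ i, v i ω = w i ω := by
  have hae : ∀ i, AEMeasurable (v i) Pr := by
    intro i
    by_contra hc
    have h0 := Measure.map_of_not_aemeasurable hc
    rw [hmap i] at h0
    have h1 : φ univ = 1 := measure_univ
    rw [h0] at h1
    simp at h1
  set w : ℕ → Ω' → ℝ := fun i ω =>
    if 0 < (hae i).mk (v i) ω then (hae i).mk (v i) ω else 1 with hw
  have hmeasw : ∀ i, Measurable (w i) := fun i =>
    Measurable.ite (measurableSet_lt measurable_const ((hae i).measurable_mk))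
      (hae i).measurable_mk measurable_const
  have haew : ∀ i, v i =ᵐ[Pr] w i := by
    intro i
    filter_upwards [(hae i).ae_eq_mk] with ω hω
    rw [hw]
    simp only [← hω, hpos i ω, if_pos]
  refine ⟨w, hmeasw, ?_, ?_, iIndepFun_ae_congr hind haew, ae_all_iff.2 haew⟩
  · intro i ω
    rw [hw]
    simp only
    split_ifs with h
    · exact h
    · norm_num
  · intro i
    rw [← Measure.map_congr (haew i), hmap i]

variable (hwm : ∀ i, Measurable (w i)) (hwp : ∀ i ω, 0 < w i ω)
  (hwmap : ∀ i, Measure.map (w i) Pr = φ)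
  (hwind : iIndepFun w Pr)

lemma SnW_measurable (hwm : ∀ i, Measurable (w i)) (n : ℕ) :
    Measurable (fun ω => Sn (tauOf w ω) n) := by
  unfold Sn tauOf
  exact Finset.measurable_sum _ (fun i _ => (hwm (i+1)).inv)

lemma tau_pos (hwp : ∀ i ω, 0 < w i ω) (ω : Ω') (n : ℕ) : 0 < tauOf w ω n :=
  inv_pos.2 (hwp n ω)

/-- `r` : the Laplace transform of `τ` at 1. -/
def rLap (Pr : Measure Ω') (w : ℕ → Ω' → ℝ) : ℝ := ∫ ω, Real.exp (-(w 1 ω)⁻¹) ∂Pr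

include hwm hwmap in
lemma rLap_eq (i : ℕ) : ∫ ω, Real.exp (-(w i ω)⁻¹) ∂Pr = rLap Pr w := by
  have hmeas : Measurable fun y : ℝ => Real.exp (-y⁻¹) :=
    (Real.continuous_exp.measurable).comp measurable_inv.neg
  have h1 : ∀ j : ℕ, ∫ ω, Real.exp (-(w j ω)⁻¹) ∂Pr = ∫ y, Real.exp (-y⁻¹) ∂φ := by
    intro j
    rw [← hwmap j, integral_map (hwm j).aemeasurable hmeas.aestronglyMeasurable]
  rw [h1 i, rLap, h1 1]

lemma rLap_nonneg : 0 ≤ rLap Pr w :=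
  integral_nonneg fun ω => (Real.exp_pos _).le

include hwm hwp in
lemma exp_neg_inv_integrable (i : ℕ) :
    Integrable (fun ω => Real.exp (-(w i ω)⁻¹)) Pr := by
  refine integrable_of_bounded_meas
    (((Real.continuous_exp.measurable).comp (hwm i).inv.neg).aestronglyMeasurable) 1 ?_
  filter_upwards with ω
  rw [abs_of_pos (Real.exp_pos _)]
  have h0 : -(w i ω)⁻¹ ≤ 0 := neg_nonpos.2 (inv_pos.2 (hwp i ω)).le
  simpa using Real.exp_le_exp.2 h0

include hwm hwp in
lemma rLap_lt_one : rLap Pr w < 1 := by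
  obtain ⟨M, hM⟩ : ∃ M : ℕ, 0 < Pr {ω | w 1 ω ≤ M} := by
    by_contra hc
    push_neg at hc
    have h0 : ∀ M : ℕ, Pr {ω | w 1 ω ≤ M} = 0 := fun M => le_antisymm (hc M) zero_le
    have hu : Pr (⋃ M : ℕ, {ω | w 1 ω ≤ (M:ℝ)}) = 0 := measure_iUnion_null h0
    have huniv : (⋃ M : ℕ, {ω | w 1 ω ≤ (M:ℝ)}) = univ := by
      ext ω
      simp only [mem_iUnion, mem_setOf_eq, mem_univ, iff_true]
      exact exists_nat_ge (w 1 ω)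
    rw [huniv, measure_univ] at hu
    simp at hu
  set K : ℝ := (M:ℝ) + 1 with hK
  have hK0 : 0 < K := by positivity
  set A : Set Ω' := {ω | w 1 ω ≤ K} with hA
  have hAmeas : MeasurableSet A := measurableSet_le (hwm 1) measurable_const
  have hPA : 0 < Pr A := lt_of_lt_of_le hM (measure_mono (fun ω h => by
    simp only [hA, mem_setOf_eq] at h ⊢; linarith))
  set e : ℝ := Real.exp (-K⁻¹) with he
  have he1 : e < 1 := by
    rw [he]
    apply Real.exp_lt_one_iff.2
    simp [inv_pos.2 hK0]
  have hb : ∀ ω, Real.exp (-(w 1 ω)⁻¹) ≤ 1 - (1 - e) * A.indicator (fun _ => (1:ℝ)) ω := by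
    intro ω
    by_cases hω : ω ∈ A
    · rw [Set.indicator_of_mem hω]
      have h1 : K⁻¹ ≤ (w 1 ω)⁻¹ := by
        apply inv_anti₀ (hwp 1 ω)
        simpa [hA] using hω
      have := Real.exp_le_exp.2 (neg_le_neg h1)
      simp only [mul_one]
      linarith
    · rw [Set.indicator_of_notMem hω]
      have h0 : -(w 1 ω)⁻¹ ≤ 0 := neg_nonpos.2 (inv_pos.2 (hwp 1 ω)).le
      have := Real.exp_le_exp.2 h0
      simp only [Real.exp_zero] at this
      linarith
  have hint2 : Integrable (fun ω => 1 - (1 - e) * A.indicator (fun _ => (1:ℝ)) ω) Pr := by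
    apply Integrable.sub (integrable_const 1)
    exact (Integrable.indicator (integrable_const 1) hAmeas).const_mul _
  have hle : rLap Pr w ≤ ∫ ω, (1 - (1 - e) * A.indicator (fun _ => (1:ℝ)) ω) ∂Pr :=
    integral_mono (exp_neg_inv_integrable hwm hwp 1) hint2 hb
  have hcalc : ∫ ω, (1 - (1 - e) * A.indicator (fun _ => (1:ℝ)) ω) ∂Pr
      = 1 - (1 - e) * (Pr A).toReal := by
    rw [integral_sub (integrable_const 1)
      ((Integrable.indicator (integrable_const 1) hAmeas).const_mul _)]
    rw [integral_const]
    simp only [measure_univ, ENNReal.toReal_one, smul_eq_mul, one_mul]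
    rw [integral_const_mul, integral_indicator_const _ hAmeas]
    simp [Measure.real]
  have hpos2 : 0 < (1 - e) * (Pr A).toReal := by
    apply mul_pos (by linarith)
    exact ENNReal.toReal_pos hPA.ne' (measure_ne_top _ _)
  calc rLap Pr w ≤ 1 - (1 - e) * (Pr A).toReal := hcalc ▸ hle
    _ < 1 := by linarith

include hwm hwp hwmap hwind in
lemma integral_exp_neg_Sn (n : ℕ) :
    ∫ ω, Real.exp (-(Sn (tauOf w ω) n)) ∂Pr = rLap Pr w ^ n := by
  induction n with
  | zero => simp [Sn]
  | succ n ih =>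
    have hτind : iIndepFun
        (fun i ω => (w i ω)⁻¹) Pr := hwind.comp (fun _ y => y⁻¹) (fun _ => measurable_inv)
    have hτmeas : ∀ i, Measurable (fun ω => (w i ω)⁻¹) := fun i => (hwm i).inv
    have hni : (n+1) ∉ (Finset.range n).image (·+1) := by
      simp only [Finset.mem_image, Finset.mem_range]
      rintro ⟨j, hj, hj2⟩
      omega
    have hind2 : IndepFun (∑ j ∈ (Finset.range n).image (·+1), (fun ω => (w j ω)⁻¹))
        (fun ω => (w (n+1) ω)⁻¹) Pr :=
      iIndepFun.indepFun_finset_sum_of_notMem hτind hτmeas hni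
    have hsum_eq : (∑ j ∈ (Finset.range n).image (·+1), (fun ω => (w j ω)⁻¹))
        = fun ω => Sn (tauOf w ω) n := by
      funext ω
      rw [Finset.sum_apply]
      rw [Finset.sum_image (fun a _ b _ h => by omega)]
      rfl
    rw [hsum_eq] at hind2
    have hind3 : IndepFun (fun ω => Real.exp (-(Sn (tauOf w ω) n)))
        (fun ω => Real.exp (-(w (n+1) ω)⁻¹)) Pr := by
      have := hind2.comp (φ := fun y : ℝ => Real.exp (-y)) (ψ := fun y : ℝ => Real.exp (-y))
        (Real.continuous_exp.measurable.comp measurable_neg)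
        (Real.continuous_exp.measurable.comp measurable_neg)
      exact this
    have hSmeas : Measurable (fun ω => Sn (tauOf w ω) n) := SnW_measurable hwm n
    have hint1 : Integrable (fun ω => Real.exp (-(Sn (tauOf w ω) n))) Pr := by
      refine integrable_of_bounded_meas
        ((Real.continuous_exp.measurable.comp hSmeas.neg).aestronglyMeasurable) 1 ?_
      filter_upwards with ω
      rw [abs_of_pos (Real.exp_pos _)]
      have h0 : -(Sn (tauOf w ω) n) ≤ 0 := neg_nonpos.2 (Sn_nonneg (tau_pos hwp ω) n)
      simpa using Real.exp_le_exp.2 h0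
    have hx : ∀ ω : Ω', Real.exp (-(Sn (tauOf w ω) (n+1)))
        = Real.exp (-(Sn (tauOf w ω) n)) * Real.exp (-(w (n+1) ω)⁻¹) := by
      intro ω
      rw [← Real.exp_add, Sn_succ (tau_pos hwp ω)]
      congr 1
      show -(Sn (tauOf w ω) n + (w (n+1) ω)⁻¹) = _
      ring
    calc ∫ ω, Real.exp (-(Sn (tauOf w ω) (n+1))) ∂Pr
        = ∫ ω, Real.exp (-(Sn (tauOf w ω) n)) * Real.exp (-(w (n+1) ω)⁻¹) ∂Pr := by
          simp_rw [hx]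
      _ = (∫ ω, Real.exp (-(Sn (tauOf w ω) n)) ∂Pr) * ∫ ω, Real.exp (-(w (n+1) ω)⁻¹) ∂Pr :=
          IndepFun.integral_fun_mul_eq_mul_integral hind3 hint1.aestronglyMeasurable
            (exp_neg_inv_integrable hwm hwp (n+1)).aestronglyMeasurable
      _ = rLap Pr w ^ n * rLap Pr w := by rw [ih, rLap_eq hwm hwmap]
      _ = rLap Pr w ^ (n+1) := by ring

include hwm hwp hwmap hwind in
lemma chernoff (n : ℕ) (t : ℝ) :
    Pr {ω | Sn (tauOf w ω) n ≤ t} ≤ ENNReal.ofReal (Real.exp t * rLap Pr w ^ n) := by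
  have hSmeas : Measurable (fun ω => Sn (tauOf w ω) n) := SnW_measurable hwm n
  have hint : Integrable (fun ω => Real.exp (t - Sn (tauOf w ω) n)) Pr := by
    have : (fun ω => Real.exp (t - Sn (tauOf w ω) n))
        = fun ω => Real.exp t * Real.exp (-(Sn (tauOf w ω) n)) := by
      funext ω; rw [← Real.exp_add, sub_eq_add_neg]
    rw [this]
    refine Integrable.const_mul ?_ _
    refine integrable_of_bounded_meas
      ((Real.continuous_exp.measurable.comp hSmeas.neg).aestronglyMeasurable) 1 ?_
    filter_upwards with ω
    rw [abs_of_pos (Real.exp_pos _)]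
    have h0 : -(Sn (tauOf w ω) n) ≤ 0 := neg_nonpos.2 (Sn_nonneg (tau_pos hwp ω) n)
    simpa using Real.exp_le_exp.2 h0
  have h1 : Pr {ω | Sn (tauOf w ω) n ≤ t}
      ≤ ∫⁻ ω, ENNReal.ofReal (Real.exp (t - Sn (tauOf w ω) n)) ∂Pr := by
    have hsub : {ω | Sn (tauOf w ω) n ≤ t}
        ⊆ {ω | 1 ≤ ENNReal.ofReal (Real.exp (t - Sn (tauOf w ω) n))} := by
      intro ω hω
      simp only [mem_setOf_eq] at hω ⊢
      rw [show (1:ℝ≥0∞) = ENNReal.ofReal 1 by simp]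
      apply ENNReal.ofReal_le_ofReal
      rw [show (1:ℝ) = Real.exp 0 from (Real.exp_zero).symm]
      exact Real.exp_le_exp.2 (by linarith)
    calc Pr {ω | Sn (tauOf w ω) n ≤ t}
        ≤ Pr {ω | 1 ≤ ENNReal.ofReal (Real.exp (t - Sn (tauOf w ω) n))} := measure_mono hsub
      _ ≤ ∫⁻ ω, ENNReal.ofReal (Real.exp (t - Sn (tauOf w ω) n)) ∂Pr := by
          have := mul_meas_ge_le_lintegral₀
            (μ := Pr) (f := fun ω => ENNReal.ofReal (Real.exp (t - Sn (tauOf w ω) n)))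
            ((ENNReal.measurable_ofReal.comp
              (Real.measurable_exp.comp (measurable_const.sub hSmeas))).aemeasurable) 1
          simpa using this
  have h2 : ∫⁻ ω, ENNReal.ofReal (Real.exp (t - Sn (tauOf w ω) n)) ∂Pr
      = ENNReal.ofReal (∫ ω, Real.exp (t - Sn (tauOf w ω) n) ∂Pr) :=
    (MeasureTheory.ofReal_integral_eq_lintegral_ofReal hint
      (Filter.Eventually.of_forall fun ω => (Real.exp_pos _).le)).symm
  have h3 : ∫ ω, Real.exp (t - Sn (tauOf w ω) n) ∂Pr = Real.exp t * rLap Pr w ^ n := by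
    have : (fun ω => Real.exp (t - Sn (tauOf w ω) n))
        = fun ω => Real.exp t * Real.exp (-(Sn (tauOf w ω) n)) := by
      funext ω; rw [← Real.exp_add, sub_eq_add_neg]
    rw [this, integral_const_mul, integral_exp_neg_Sn hwm hwp hwmap hwind]
  rw [h2, h3] at h1
  exact h1

include hwm hwp hwmap hwind in
lemma chernoff_tsum (t : ℝ) : (∑' n, Pr {ω | Sn (tauOf w ω) n ≤ t}) ≠ ⊤ := by
  have hr0 := rLap_nonneg (Pr := Pr) (w := w)
  have hr1 := rLap_lt_one (Pr := Pr) hwm hwp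
  have hb : (∑' n, Pr {ω | Sn (tauOf w ω) n ≤ t})
      ≤ ∑' n, ENNReal.ofReal (Real.exp t) * (ENNReal.ofReal (rLap Pr w)) ^ n := by
    apply ENNReal.tsum_le_tsum
    intro n
    refine le_trans (chernoff hwm hwp hwmap hwind n t) ?_
    rw [ENNReal.ofReal_mul (Real.exp_pos t).le, ENNReal.ofReal_pow hr0]
  refine ne_top_of_le_ne_top ?_ hb
  rw [ENNReal.tsum_mul_left]
  apply ENNReal.mul_ne_top ENNReal.ofReal_ne_top
  rw [ENNReal.tsum_geometric]
  rw [Ne, ENNReal.inv_eq_top]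
  exact (tsub_pos_iff_lt.2 (ENNReal.ofReal_lt_one.2 hr1)).ne'

include hwm hwp hwmap hwind in
lemma ae_tendsto_Sn :
    ∀ᵐ ω ∂Pr, Tendsto (fun n => Sn (tauOf w ω) n) atTop atTop := by
  have hae : ∀ k : ℕ, ∀ᵐ ω ∂Pr, ∀ᶠ n in atTop, ω ∉ {ω' | Sn (tauOf w ω') n ≤ (k:ℝ)} :=
    fun k => ae_eventually_notMem (chernoff_tsum hwm hwp hwmap hwind (k:ℝ))
  have := ae_all_iff.2 hae
  filter_upwards [this] with ω hω
  rw [tendsto_atTop]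
  intro b
  obtain ⟨k, hk⟩ := exists_nat_ge b
  filter_upwards [hω k] with n hn
  simp only [mem_setOf_eq, not_le] at hn
  linarith

include hwm hwind in
lemma indep_factor (k : ℕ) (u : ℝ) {h : ℝ → ℝ} (hh : Measurable h) (C : ℝ)
    (hb : ∀ y, |h y| ≤ C) :
    ∫ ω, (h (w (k+1) ω)) * (if Sn (tauOf w ω) k ≤ u then (1:ℝ) else 0) ∂Pr
      = (∫ ω, h (w (k+1) ω) ∂Pr) * (Pr {ω' | Sn (tauOf w ω') k ≤ u}).toReal := by
  have hτind : iIndepFun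
      (fun i ω => (w i ω)⁻¹) Pr := hwind.comp (fun _ y => y⁻¹) (fun _ => measurable_inv)
  have hτmeas : ∀ i, Measurable (fun ω => (w i ω)⁻¹) := fun i => (hwm i).inv
  have hki : (k+1) ∉ (Finset.range k).image (·+1) := by
    simp only [Finset.mem_image, Finset.mem_range]
    rintro ⟨j, hj, hj2⟩
    omega
  have hind2 : IndepFun (∑ j ∈ (Finset.range k).image (·+1), (fun ω => (w j ω)⁻¹))
      (fun ω => (w (k+1) ω)⁻¹) Pr :=
    iIndepFun.indepFun_finset_sum_of_notMem hτind hτmeas hki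
  have hsum_eq : (∑ j ∈ (Finset.range k).image (·+1), (fun ω => (w j ω)⁻¹))
      = fun ω => Sn (tauOf w ω) k := by
    funext ω
    rw [Finset.sum_apply, Finset.sum_image (fun a _ b _ h2 => by omega)]
    rfl
  rw [hsum_eq] at hind2
  set ψ : ℝ → ℝ := (Iic u).indicator (fun _ => (1:ℝ)) with hψdef
  have hψm : Measurable ψ := measurable_const.indicator measurableSet_Iic
  have hψ_if : ∀ y : ℝ, ψ y = if y ≤ u then (1:ℝ) else 0 := by
    intro y
    rw [hψdef, Set.indicator_apply]
    simp [mem_Iic]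
  have hXY : IndepFun (fun ω => h (w (k+1) ω))
      (fun ω => ψ (Sn (tauOf w ω) k)) Pr := by
    have hcomp := IndepFun.comp hind2.symm (φ := fun y : ℝ => h y⁻¹) (ψ := ψ)
      (hh.comp measurable_inv) hψm
    have heq : ((fun y : ℝ => h y⁻¹) ∘ (fun ω => (w (k+1) ω)⁻¹))
        = fun ω => h (w (k+1) ω) := by
      funext ω
      simp [Function.comp, inv_inv]
    rwa [heq] at hcomp
  have hSmeas : Measurable (fun ω => Sn (tauOf w ω) k) := SnW_measurable hwm k
  have hsetm : MeasurableSet {ω' | Sn (tauOf w ω') k ≤ u} := measurableSet_le hSmeas measurable_const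
  have hIX : Integrable (fun ω => h (w (k+1) ω)) Pr :=
    integrable_of_bounded_meas ((hh.comp (hwm (k+1))).aestronglyMeasurable) C
      (Filter.Eventually.of_forall fun ω => hb _)
  have hIY : Integrable (fun ω => ψ (Sn (tauOf w ω) k)) Pr := by
    refine integrable_of_bounded_meas (hψm.comp hSmeas).aestronglyMeasurable 1 ?_
    filter_upwards with ω
    rw [hψ_if]
    split_ifs <;> simp
  have key := IndepFun.integral_mul_eq_mul_integral hXY hIX.aestronglyMeasurable hIY.aestronglyMeasurable
  have hl : ∫ ω, (h (w (k+1) ω)) * (if Sn (tauOf w ω) k ≤ u then (1:ℝ) else 0) ∂Pr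
      = ∫ ω, ((fun ω => h (w (k+1) ω)) * (fun ω => ψ (Sn (tauOf w ω) k))) ω ∂Pr := by
    refine integral_congr_ae (Filter.Eventually.of_forall fun ω => ?_)
    rw [Pi.mul_apply, hψ_if]
  rw [hl]
  rw [show ∫ ω, ((fun ω => h (w (k+1) ω)) * (fun ω => ψ (Sn (tauOf w ω) k))) ω ∂Pr
      = ∫ ω, (fun ω => h (w (k+1) ω)) ω * (fun ω => ψ (Sn (tauOf w ω) k)) ω ∂Pr from rfl] at hl
  calc ∫ ω, (h (w (k+1) ω)) * (if Sn (tauOf w ω) k ≤ u then (1:ℝ) else 0) ∂Pr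
      = (∫ ω, h (w (k+1) ω) ∂Pr) * ∫ ω, ψ (Sn (tauOf w ω) k) ∂Pr := by rw [hl]; exact key
    _ = (∫ ω, h (w (k+1) ω) ∂Pr) * (Pr {ω' | Sn (tauOf w ω') k ≤ u}).toReal := by
        congr 1
        have h2 : (fun ω => ψ (Sn (tauOf w ω) k))
            = ({ω' | Sn (tauOf w ω') k ≤ u}).indicator (fun _ => (1:ℝ)) := by
          funext ω
          rw [hψ_if, Set.indicator_apply]
          simp [mem_setOf_eq]
        rw [h2, integral_indicator_const _ hsetm]
        simp [Measure.real]

/-! Group C : the good event and joint measurability -/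

def OmegaG (w : ℕ → Ω' → ℝ) : Set Ω' :=
  {ω | Tendsto (fun n => Sn (tauOf w ω) n) atTop atTop}

include hwm in
lemma OmegaG_measurable : MeasurableSet (OmegaG w) := by
  have hset : OmegaG w = ⋂ (k : ℕ), ⋃ (N : ℕ), ⋂ (n : ℕ),
      {ω | n < N ∨ (k:ℝ) ≤ Sn (tauOf w ω) n} := by
    ext ω
    simp only [OmegaG, mem_setOf_eq, mem_iInter, mem_iUnion]
    constructor
    · intro hω k
      obtain ⟨N, hN⟩ := (tendsto_atTop.1 hω (k:ℝ)).exists_forall_of_atTop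
      exact ⟨N, fun n => by
        rcases lt_or_ge n N with hn | hn
        · exact Or.inl hn
        · exact Or.inr (hN n hn)⟩
    · intro hω
      rw [tendsto_atTop]
      intro b
      obtain ⟨k, hk⟩ := exists_nat_ge b
      obtain ⟨N, hN⟩ := hω k
      filter_upwards [eventually_ge_atTop N] with n hn
      rcases hN n with hx | hx
      · omega
      · linarith
  rw [hset]
  refine MeasurableSet.iInter fun k => MeasurableSet.iUnion fun N => MeasurableSet.iInter fun n => ?_
  rcases lt_or_ge n N with hn | hn
  · convert MeasurableSet.univ
    ext ω; simp [hn]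
  · have : {ω : Ω' | n < N ∨ (k:ℝ) ≤ Sn (tauOf w ω) n} = {ω | (k:ℝ) ≤ Sn (tauOf w ω) n} := by
      ext ω; simp [Nat.not_lt.2 hn]
    rw [this]
    exact measurableSet_le measurable_const (SnW_measurable hwm n)

include hwp in
lemma Nt_eq_iff {ω : Ω'} (hω : ω ∈ OmegaG w) (u : ℝ) (n : ℕ) :
    Nt (tauOf w ω) u = n ↔
      (u < Sn (tauOf w ω) (n+1) ∧ (Sn (tauOf w ω) n ≤ u ∨ n = 0)) := by
  have hpos := tau_pos hwp ω
  constructor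
  · rintro rfl
    rcases le_or_gt 0 u with hu | hu
    · exact ⟨Nt_lt_succ hpos hω u, Or.inl (Nt_le hpos hω hu)⟩
    · have hempty : {n | Sn (tauOf w ω) n ≤ u} = ∅ := by
        ext m
        simp only [mem_setOf_eq, mem_empty_iff_false, iff_false, not_le]
        exact lt_of_lt_of_le hu (Sn_nonneg hpos m)
      have h0 : Nt (tauOf w ω) u = 0 := by simp [Nt, hempty, csSup_empty]
      rw [h0]
      refine ⟨lt_of_lt_of_le hu ?_, Or.inr rfl⟩
      exact (Sn_nonneg hpos _)
  · rintro ⟨h1, h2⟩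
    rcases h2 with h2 | h2
    · exact Nt_eq hpos hω (Or.inl h2) h1
    · exact Nt_eq hpos hω (Or.inr h2) h1

open scoped Classical in
def NNj (w : ℕ → Ω' → ℝ) : ℝ × Ω' → ℕ := fun s =>
  if s.2 ∈ OmegaG w then Nt (tauOf w s.2) s.1 else 0

include hwm hwp in
lemma NNj_measurable : Measurable (NNj w) := by
  apply measurable_to_countable'
  intro n
  have hG := OmegaG_measurable hwm
  have hkey : NNj w ⁻¹' {n}
      = ((univ : Set ℝ) ×ˢ (OmegaG w)ᶜ ∩ (if n = 0 then univ else ∅))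
        ∪ ({s : ℝ × Ω' | s.2 ∈ OmegaG w ∧ s.1 < Sn (tauOf w s.2) (n+1)
            ∧ (Sn (tauOf w s.2) n ≤ s.1 ∨ n = 0)}) := by
    ext ⟨u, ω⟩
    simp only [mem_preimage, mem_singleton_iff, NNj, mem_union, mem_inter_iff, mem_prod,
      mem_univ, true_and, mem_compl_iff, mem_setOf_eq]
    by_cases hω : ω ∈ OmegaG w
    · simp only [hω, if_pos, not_true_eq_false, false_and, false_or, true_and]
      exact Nt_eq_iff hwp hω u n
    · simp only [hω, if_neg, not_false_eq_true, true_and, false_and, and_false, or_false]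
      constructor
      · rintro rfl; simp
      · intro hx
        split_ifs at hx with hn
        · omega
        · simp at hx
  rw [hkey]
  apply MeasurableSet.union
  · apply MeasurableSet.inter
    · exact MeasurableSet.prod MeasurableSet.univ hG.compl
    · split_ifs <;> simp
  · have hs1 : MeasurableSet {s : ℝ × Ω' | s.2 ∈ OmegaG w} := hG.preimage measurable_snd
    have hs2 : MeasurableSet {s : ℝ × Ω' | s.1 < Sn (tauOf w s.2) (n+1)} :=
      measurableSet_lt measurable_fst ((SnW_measurable hwm (n+1)).comp measurable_snd)
    have hs3 : MeasurableSet {s : ℝ × Ω' | Sn (tauOf w s.2) n ≤ s.1 ∨ n = 0} := by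
      rcases Nat.eq_zero_or_pos n with hn | hn
      · convert MeasurableSet.univ
        ext s; simp [hn]
      · have : {s : ℝ × Ω' | Sn (tauOf w s.2) n ≤ s.1 ∨ n = 0}
            = {s : ℝ × Ω' | Sn (tauOf w s.2) n ≤ s.1} := by
          ext s; simp [Nat.pos_iff_ne_zero.1 hn]
        rw [this]
        exact measurableSet_le ((SnW_measurable hwm n).comp measurable_snd) measurable_fst
    have : {s : ℝ × Ω' | s.2 ∈ OmegaG w ∧ s.1 < Sn (tauOf w s.2) (n+1)
        ∧ (Sn (tauOf w s.2) n ≤ s.1 ∨ n = 0)}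
        = {s : ℝ × Ω' | s.2 ∈ OmegaG w} ∩ ({s : ℝ × Ω' | s.1 < Sn (tauOf w s.2) (n+1)}
          ∩ {s : ℝ × Ω' | Sn (tauOf w s.2) n ≤ s.1 ∨ n = 0}) := by
      ext s; simp [mem_inter_iff, mem_setOf_eq, and_assoc]
    rw [this]
    exact hs1.inter (hs2.inter hs3)

def Ytrajj (w : ℕ → Ω' → ℝ) : ℝ × Ω' → ℝ × ℝ := fun s =>
  ((s.1 - Sn (tauOf w s.2) (NNj w s)) / tauOf w s.2 (NNj w s + 1),
    (tauOf w s.2 (NNj w s + 1))⁻¹)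

include hwm hwp in
lemma Ytrajj_measurable : Measurable (Ytrajj w) := by
  have hF : Measurable (fun x : (ℝ × Ω') × ℕ =>
      ((x.1.1 - Sn (tauOf w x.1.2) x.2) / tauOf w x.1.2 (x.2 + 1),
        (tauOf w x.1.2 (x.2 + 1))⁻¹)) := by
    apply measurable_from_prod_countable_left
    intro n
    apply Measurable.prod
    · simp only [tauOf]
      exact ((measurable_fst.sub ((SnW_measurable hwm n).comp measurable_snd)).div
        (((hwm (n+1)).comp measurable_snd).inv))
    · simp only [tauOf]
      exact ((hwm (n+1)).comp measurable_snd).inv.inv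
  have : Ytrajj w = (fun x : (ℝ × Ω') × ℕ =>
      ((x.1.1 - Sn (tauOf w x.1.2) x.2) / tauOf w x.1.2 (x.2 + 1),
        (tauOf w x.1.2 (x.2 + 1))⁻¹)) ∘ (fun s => (s, NNj w s)) := rfl
  rw [this]
  exact hF.comp (measurable_id.prodMk (NNj_measurable hwm hwp))

lemma Ytrajj_eq {ω : Ω'} (hω : ω ∈ OmegaG w) (u : ℝ) :
    Ytrajj w (u, ω) = trajU (tauOf w ω) u := by
  have hN : NNj w (u, ω) = Nt (tauOf w ω) u := if_pos hω
  simp only [Ytrajj, trajU, hN]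

open scoped Classical in
def Xfull (w : ℕ → Ω' → ℝ) (q p : ℝ) : ℝ × Ω' → ℝ × ℝ := fun s =>
  if p * s.1 < 1 - q then (q + p * s.1, p) else Ytrajj w (s.1 - T0 q p, s.2)

include hwm hwp in
lemma Xfull_measurable (q p : ℝ) : Measurable (Xfull w q p) := by
  unfold Xfull
  apply Measurable.ite
  · exact measurableSet_lt (measurable_const.mul measurable_fst) measurable_const
  · exact (measurable_const.add (measurable_const.mul measurable_fst)).prodMk measurable_const
  · exact (Ytrajj_measurable hwm hwp).comp
      ((measurable_fst.sub measurable_const).prodMk measurable_snd)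

lemma Xfull_eq {ω : Ω'} (hω : ω ∈ OmegaG w) (q p s : ℝ) :
    Xfull w q p (s, ω) = Fmap q p s (tauOf w ω) := by
  unfold Xfull Fmap
  split_ifs with h
  · rfl
  · exact Ytrajj_eq hω _

include hwp in
lemma Xfull_mem {ω : Ω'} (hω : ω ∈ OmegaG w) {q p : ℝ} (hqp : (q,p) ∈ box1) {s : ℝ}
    (hs : 0 ≤ s) : Xfull w q p (s, ω) ∈ box1 := by
  rw [Xfull_eq hω]
  exact (Fmap_mem (tau_pos hwp ω) hω hqp hs).1

end B

/-! Group D : the pathwise identity -/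

section PATH

lemma intervalIntegral_congr_off_singleton {f g : ℝ → ℝ} {a b x0 : ℝ}
    (h : ∀ s ∈ Set.uIoc a b, s ≠ x0 → f s = g s) :
    ∫ s in a..b, f s = ∫ s in a..b, g s := by
  apply intervalIntegral.integral_congr_ae
  have hae : ∀ᵐ s ∂(volume : Measure ℝ), s ≠ x0 := by
    rw [ae_iff]
    have : {s : ℝ | ¬ s ≠ x0} = {x0} := by ext s; simp
    rw [this]
    exact Real.volume_singleton
  filter_upwards [hae] with s hs hmem
  exact h s hmem hs

lemma intervalIntegrable_congr_off_singleton {f g : ℝ → ℝ} {a b x0 : ℝ}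
    (h : ∀ s ∈ Set.uIoc a b, s ≠ x0 → f s = g s) (hg : IntervalIntegrable g volume a b) :
    IntervalIntegrable f volume a b := by
  rw [intervalIntegrable_iff] at hg ⊢
  apply hg.congr
  have hae : ∀ᵐ s ∂(volume : Measure ℝ), s ≠ x0 := by
    rw [ae_iff]
    have : {s : ℝ | ¬ s ≠ x0} = {x0} := by ext s; simp
    rw [this]
    exact Real.volume_singleton
  filter_upwards [ae_restrict_mem measurableSet_uIoc, ae_restrict_of_ae hae] with s hmem hs
  exact (h s hmem hs).symm

variable {τ : ℕ → ℝ} (hpos : ∀ n, 0 < τ n) (hS : Tendsto (Sn τ) atTop atTop)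

lemma Fmap_pos_branch {q p t : ℝ} (h : p * t < 1 - q) : Fmap q p t τ = (q + p * t, p) :=
  if_pos h

lemma Fmap_neg_branch {q p t : ℝ} (h : ¬ p * t < 1 - q) :
    Fmap q p t τ = trajU τ (t - T0 q p) := if_neg h

include hpos in
lemma Tn_succ_sub (q p : ℝ) (k : ℕ) : Tn q p τ (k+1) = Tn q p τ k + τ (k+1) := by
  simp only [Tn, Sn_succ hpos]
  ring

include hpos in
lemma Tn_mono (q p : ℝ) : Monotone (Tn q p τ) := by
  intro a b hab
  simp only [Tn]
  have := (Sn_strictMono hpos).monotone hab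
  linarith

lemma Tn_zero (q p : ℝ) : Tn q p τ 0 = T0 q p := by
  simp [Tn, Sn]

lemma q_add_p_T0 {q p : ℝ} (hqp : (q,p) ∈ box1) (hcase : 0 < p ∨ q = 1) :
    q + p * T0 q p = 1 := by
  rcases hcase with hp | hq
  · rw [T0]
    field_simp
    ring
  · subst hq
    simp [T0]

include hpos hS in
lemma Fmap_formula {q p : ℝ} (hqp : (q,p) ∈ box1) (hcase : 0 < p ∨ q = 1) {s : ℝ} (n : ℕ)
    (h1 : Tn q p τ n ≤ s) (h2 : s < Tn q p τ (n+1)) :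
    Fmap q p s τ = ((s - Tn q p τ n) / τ (n+1), (τ (n+1))⁻¹) := by
  obtain ⟨⟨hq0, hq1⟩, hp⟩ := hqp
  simp only [mem_Ici] at hp
  have hT0s : T0 q p ≤ s := by
    have hSnn := Sn_nonneg hpos n
    simp only [Tn] at h1
    linarith
  have hbr : ¬ p * s < 1 - q := by
    rcases hcase with hp0 | hq
    · rw [not_lt]
      rw [T0, div_le_iff₀ hp0] at hT0s
      linarith [mul_comm p s]
    · subst hq
      simp only [sub_self, not_lt]
      have hs0 : 0 ≤ s := le_trans (by simp [T0]) hT0s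
      exact mul_nonneg hp hs0
  rw [Fmap_neg_branch hbr]
  have heq := trajU_eq hpos hS (u := s - T0 q p) (n := n)
    (Or.inl (by simp only [Tn] at h1; linarith))
    (by simp only [Tn] at h2; linarith)
  rw [heq]
  congr 2
  simp only [Tn]
  ring

open scoped Classical in
/-- The sum of boundary jumps of the path up to time `t`. -/
def Jpath (fB : ℝ × ℝ → ℝ) (c q p t : ℝ) (τ : ℕ → ℝ) : ℝ :=
  if T0 q p ≤ t then
    (∑ k ∈ Finset.range (Nt τ (t - T0 q p) + 1), (fB (0, (τ (k+1))⁻¹) - c))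
      + (c - fB (1, p))
  else 0

lemma Jpath_pos {fB : ℝ × ℝ → ℝ} {c q p t : ℝ} (h : T0 q p ≤ t) :
    Jpath fB c q p t τ = (∑ k ∈ Finset.range (Nt τ (t - T0 q p) + 1),
      (fB (0, (τ (k+1))⁻¹) - c)) + (c - fB (1, p)) := if_pos h

lemma Jpath_neg {fB : ℝ × ℝ → ℝ} {c q p t : ℝ} (h : ¬ T0 q p ≤ t) :
    Jpath fB c q p t τ = 0 := if_neg h

include hpos hS in
theorem path_identity {fB DB : ℝ × ℝ → ℝ} (hfB : Continuous fB) (hDB : Continuous DB)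
    (hder : ∀ y ∈ Ioo (0:ℝ) 1, ∀ v : ℝ, 0 < v →
      HasDerivAt (fun z => fB (z, v)) (DB (y, v) / v) y)
    {c : ℝ} (hbdy : ∀ p' : ℝ, 0 ≤ p' → fB (1, p') = c)
    {q p : ℝ} (hqp : (q,p) ∈ box1) (hcase : 0 < p ∨ q = 1) {t : ℝ} (ht : 0 ≤ t) :
    ∫ s in (0:ℝ)..t, DB (Fmap q p s τ)
      = fB (Fmap q p t τ) - fB (q, p) - Jpath fB c q p t τ := by
  obtain ⟨⟨hq0, hq1⟩, hp⟩ := hqp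
  simp only [mem_Ici] at hp
  simp only [mem_Icc] at hq0 hq1
  have hqpm : (q,p) ∈ box1 := ⟨⟨hq0, hq1⟩, hp⟩
  by_cases hT : T0 q p ≤ t
  case neg =>
    have hp0 : 0 < p := by
      rcases hcase with h | h
      · exact h
      · exfalso; apply hT; subst h; simp [T0, ht]
    have hfree : ∀ s ∈ Icc (0:ℝ) t, p * s < 1 - q := by
      intro s hs
      have h1 : s < T0 q p := lt_of_le_of_lt hs.2 (not_le.1 hT)
      rw [T0, lt_div_iff₀ hp0] at h1
      linarith [mul_comm s p]
    have hcongr : ∫ s in (0:ℝ)..t, DB (Fmap q p s τ) = ∫ s in (0:ℝ)..t, DB (q + p * s, p) := by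
      apply intervalIntegral.integral_congr
      intro s hs
      rw [uIcc_of_le ht] at hs
      show DB (Fmap q p s τ) = DB (q + p * s, p)
      rw [Fmap_pos_branch (hfree s hs)]
    rw [hcongr]
    have hftc := intervalIntegral.integral_eq_sub_of_hasDeriv_right_of_le ht
      (f := fun s => fB (q + p * s, p)) (f' := fun s => DB (q + p * s, p))
      ((hfB.comp ((continuous_const.add (continuous_const.mul continuous_id)).prodMk
          continuous_const)).continuousOn)
      (by
        intro s hs
        have hmem : q + p * s ∈ Ioo (0:ℝ) 1 := by
          constructor
          · have : 0 < p * s := mul_pos hp0 hs.1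
            linarith
          · have := hfree s ⟨hs.1.le, hs.2.le⟩
            linarith
        have houter := hder _ hmem p hp0
        have hinner : HasDerivAt (fun s : ℝ => q + p * s) p s := by
          simpa using ((hasDerivAt_id s).const_mul p).const_add q
        have hcomp := houter.comp s hinner
        have hval : DB (q + p * s, p) / p * p = DB (q + p * s, p) :=
          div_mul_cancel₀ _ (ne_of_gt hp0)
        rw [hval] at hcomp
        exact hcomp.hasDerivWithinAt)
      (((hDB.comp ((continuous_const.add (continuous_const.mul continuous_id)).prodMk
          continuous_const)).intervalIntegrable 0 t))
    rw [hftc]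
    rw [Fmap_pos_branch (hfree t ⟨ht, le_refl t⟩), Jpath_neg hT]
    simp
  case pos =>
    set N := Nt τ (t - T0 q p) with hN
    have htT0 : 0 ≤ t - T0 q p := by linarith
    have hSN : Sn τ N ≤ t - T0 q p := Nt_le hpos hS htT0
    have hSN1 : t - T0 q p < Sn τ (N+1) := Nt_lt_succ hpos hS _
    have hTNle : Tn q p τ N ≤ t := by simp only [Tn]; linarith
    have hTN1gt : t < Tn q p τ (N+1) := by simp only [Tn]; linarith
    have hT0nn : 0 ≤ T0 q p := T0_nonneg hpos hS hq1 hp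
    have hTn0 : Tn q p τ 0 = T0 q p := Tn_zero q p
    -- piece 0
    have hv1 : q + p * T0 q p = 1 := q_add_p_T0 hqpm hcase
    have piece0 : IntervalIntegrable (fun s => DB (Fmap q p s τ)) volume 0 (T0 q p) ∧
        ∫ s in (0:ℝ)..(T0 q p), DB (Fmap q p s τ) = fB (1, p) - fB (q, p) := by
      have hcong : ∀ s ∈ Set.uIoc (0:ℝ) (T0 q p), s ≠ T0 q p →
          DB (Fmap q p s τ) = DB (q + p * s, p) := by
        intro s hs hsne
        rw [uIoc_of_le hT0nn] at hs
        have hslt : s < T0 q p := lt_of_le_of_ne hs.2 hsne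
        have hp0 : 0 < p := by
          rcases hcase with h | h
          · exact h
          · exfalso
            subst h
            simp only [T0, sub_self, zero_div] at hslt
            exact absurd hs.1 (not_lt.2 hslt.le)
        have : p * s < 1 - q := by
          rw [T0, lt_div_iff₀ hp0] at hslt
          linarith [mul_comm s p]
        rw [Fmap_pos_branch this]
      have hGint : IntervalIntegrable (fun s => DB (q + p * s, p)) volume 0 (T0 q p) :=
        (hDB.comp ((continuous_const.add (continuous_const.mul continuous_id)).prodMk
          continuous_const)).intervalIntegrable 0 (T0 q p)
      refine ⟨intervalIntegrable_congr_off_singleton hcong hGint, ?_⟩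
      rw [intervalIntegral_congr_off_singleton hcong]
      have hftc := intervalIntegral.integral_eq_sub_of_hasDeriv_right_of_le hT0nn
        (f := fun s => fB (q + p * s, p)) (f' := fun s => DB (q + p * s, p))
        ((hfB.comp ((continuous_const.add (continuous_const.mul continuous_id)).prodMk
            continuous_const)).continuousOn)
        (by
          intro s hs
          have hp0 : 0 < p := by
            rcases hcase with h | h
            · exact h
            · exfalso
              subst h
              simp only [T0, sub_self, zero_div] at hs
              exact absurd hs.1 (not_lt.2 hs.2.le)
          have hmem : q + p * s ∈ Ioo (0:ℝ) 1 := by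
            constructor
            · have : 0 < p * s := mul_pos hp0 hs.1
              linarith
            · have h2 := hs.2
              rw [T0, lt_div_iff₀ hp0] at h2
              have h3 := mul_comm s p ▸ h2
              linarith
          have houter := hder _ hmem p hp0
          have hinner : HasDerivAt (fun s : ℝ => q + p * s) p s := by
            simpa using ((hasDerivAt_id s).const_mul p).const_add q
          have hcomp := houter.comp s hinner
          have hval : DB (q + p * s, p) / p * p = DB (q + p * s, p) :=
            div_mul_cancel₀ _ (ne_of_gt hp0)
          rw [hval] at hcomp
          exact hcomp.hasDerivWithinAt)
        hGint
      rw [hftc]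
      show fB (q + p * T0 q p, p) - fB (q + p * 0, p) = _
      rw [hv1]
      simp
    -- pieces k+1
    have pieceS : ∀ k : ℕ, IntervalIntegrable (fun s => DB (Fmap q p s τ)) volume
          (min t (Tn q p τ k)) (min t (Tn q p τ (k+1))) ∧
        ∫ s in (min t (Tn q p τ k))..(min t (Tn q p τ (k+1))), DB (Fmap q p s τ)
          = if Tn q p τ k ≤ t then
              fB ((min t (Tn q p τ (k+1)) - Tn q p τ k) / τ (k+1), (τ (k+1))⁻¹)
                - fB (0, (τ (k+1))⁻¹)
            else 0 := by
      intro k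
      by_cases hk : Tn q p τ k ≤ t
      case neg =>
        have h1 : min t (Tn q p τ k) = t := min_eq_left (not_le.1 hk).le
        have h2 : min t (Tn q p τ (k+1)) = t :=
          min_eq_left (le_trans (not_le.1 hk).le (Tn_mono hpos q p (Nat.le_succ k)))
        rw [h1, h2, if_neg hk]
        exact ⟨IntervalIntegrable.refl, intervalIntegral.integral_same⟩
      case pos =>
        rw [min_eq_right hk, if_pos hk]
        set a := Tn q p τ k with ha
        set b := min t (Tn q p τ (k+1)) with hb
        have hab : a ≤ b := le_min hk (Tn_mono hpos q p (Nat.le_succ k))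
        have hbT : b ≤ Tn q p τ (k+1) := min_le_right _ _
        set v := (τ (k+1))⁻¹ with hv
        have hv0 : 0 < v := inv_pos.2 (hpos (k+1))
        have hcong : ∀ s ∈ Set.uIoc a b, s ≠ Tn q p τ (k+1) →
            DB (Fmap q p s τ) = DB ((s - a) / τ (k+1), v) := by
          intro s hs hsne
          rw [uIoc_of_le hab] at hs
          have hs2 : s < Tn q p τ (k+1) := lt_of_le_of_ne (le_trans hs.2 hbT) hsne
          rw [Fmap_formula hpos hS hqpm hcase k (le_of_lt hs.1) hs2]
        have hGint : IntervalIntegrable (fun s => DB ((s - a) / τ (k+1), v)) volume a b :=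
          (hDB.comp ((((continuous_id.sub continuous_const)).div_const _).prodMk
            continuous_const)).intervalIntegrable a b
        refine ⟨intervalIntegrable_congr_off_singleton hcong hGint, ?_⟩
        rw [intervalIntegral_congr_off_singleton hcong]
        have hftc := intervalIntegral.integral_eq_sub_of_hasDeriv_right_of_le hab
          (f := fun s => fB ((s - a) / τ (k+1), v)) (f' := fun s => DB ((s - a) / τ (k+1), v))
          ((hfB.comp ((((continuous_id.sub continuous_const)).div_const _).prodMk
              continuous_const)).continuousOn)
          (by
            intro s hs
            have hmem : (s - a) / τ (k+1) ∈ Ioo (0:ℝ) 1 := by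
              constructor
              · exact div_pos (by linarith [hs.1]) (hpos (k+1))
              · rw [div_lt_one (hpos (k+1))]
                have hs2 : s < Tn q p τ (k+1) := lt_of_lt_of_le hs.2 hbT
                rw [Tn_succ_sub hpos] at hs2
                linarith
            have houter := hder _ hmem v hv0
            have hinner : HasDerivAt (fun s : ℝ => (s - a) / τ (k+1)) (τ (k+1))⁻¹ s := by
              have h5 : HasDerivAt (fun s : ℝ => (s - a) * (τ (k+1))⁻¹) (1 * (τ (k+1))⁻¹) s :=
                ((hasDerivAt_id s).sub_const a).mul_const _
              simpa [div_eq_mul_inv] using h5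
            have hcomp := houter.comp s hinner
            have hval : DB ((s - a) / τ (k+1), v) / v * (τ (k+1))⁻¹
                = DB ((s - a) / τ (k+1), v) := by
              rw [← hv, div_mul_cancel₀ _ (ne_of_gt hv0)]
            rw [hval] at hcomp
            exact hcomp.hasDerivWithinAt)
          hGint
        rw [hftc]
        show fB ((b - a) / τ (k+1), v) - fB ((a - a) / τ (k+1), v) = _
        rw [sub_self, zero_div]
    -- assemble
    set P : ℕ → ℝ := fun k => Nat.casesOn k 0 (fun j => min t (Tn q p τ j)) with hP
    have hint_all : ∀ k < N + 2, IntervalIntegrable (fun s => DB (Fmap q p s τ)) volume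
        (P k) (P (k+1)) := by
      intro k _
      cases k with
      | zero =>
        show IntervalIntegrable _ volume 0 (min t (Tn q p τ 0))
        rw [hTn0, min_eq_right hT]
        exact piece0.1
      | succ j =>
        exact (pieceS j).1
    have hsum := intervalIntegral.sum_integral_adjacent_intervals hint_all
    have hPend : P (N+2) = t := by
      show min t (Tn q p τ (N+1)) = t
      exact min_eq_left hTN1gt.le
    rw [hPend] at hsum
    have hP0' : P 0 = 0 := rfl
    rw [hP0'] at hsum
    rw [← hsum]
    rw [Finset.sum_range_succ']
    have hpiece0' : ∫ s in (P 0)..(P 1), DB (Fmap q p s τ) = fB (1, p) - fB (q, p) := by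
      show ∫ s in (0:ℝ)..(min t (Tn q p τ 0)), DB (Fmap q p s τ) = _
      rw [hTn0, min_eq_right hT]
      exact piece0.2
    have hterm : ∀ k ∈ Finset.range (N+1),
        ∫ s in (P (k+1))..(P (k+2)), DB (Fmap q p s τ)
          = if k < N then c - fB (0, (τ (k+1))⁻¹)
            else fB (Fmap q p t τ) - fB (0, (τ (N+1))⁻¹) := by
      intro k hk
      rw [Finset.mem_range] at hk
      have hkN : k ≤ N := by omega
      have hkle : Tn q p τ k ≤ t := le_trans (Tn_mono hpos q p hkN) hTNle
      have hps := (pieceS k).2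
      rw [if_pos hkle] at hps
      show ∫ s in (min t (Tn q p τ k))..(min t (Tn q p τ (k+1))), DB (Fmap q p s τ) = _
      rw [hps]
      by_cases hkN' : k < N
      case pos =>
        rw [if_pos hkN']
        have hk1 : Tn q p τ (k+1) ≤ t := le_trans (Tn_mono hpos q p (by omega : k+1 ≤ N)) hTNle
        rw [min_eq_right hk1]
        have hr : (Tn q p τ (k+1) - Tn q p τ k) / τ (k+1) = 1 := by
          rw [Tn_succ_sub hpos, add_sub_cancel_left, div_self (ne_of_gt (hpos (k+1)))]
        rw [hr, hbdy _ (inv_pos.2 (hpos (k+1))).le]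
      case neg =>
        rw [if_neg hkN']
        have hkeq : k = N := by omega
        rw [hkeq]
        have hmt : min t (Tn q p τ (N+1)) = t := min_eq_left hTN1gt.le
        rw [hmt]
        congr 2
        rw [Fmap_formula hpos hS hqpm hcase N hTNle hTN1gt]
    rw [Finset.sum_congr rfl hterm]
    rw [show P (0+1) = P 1 from rfl, hpiece0']
    have hsplit : ∑ k ∈ Finset.range (N+1),
        (if k < N then c - fB (0, (τ (k+1))⁻¹)
          else fB (Fmap q p t τ) - fB (0, (τ (N+1))⁻¹))
        = (∑ k ∈ Finset.range N, (c - fB (0, (τ (k+1))⁻¹)))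
          + (fB (Fmap q p t τ) - fB (0, (τ (N+1))⁻¹)) := by
      rw [Finset.sum_range_succ, if_neg (lt_irrefl N)]
      congr 1
      apply Finset.sum_congr rfl
      intro k hk
      rw [Finset.mem_range] at hk
      rw [if_pos hk]
    rw [hsplit]
    rw [Jpath_pos hT, ← hN]
    rw [Finset.sum_range_succ]
    have e1 : ∑ k ∈ Finset.range N, (c - fB (0, (τ (k+1))⁻¹))
        = N * c - ∑ k ∈ Finset.range N, fB (0, (τ (k+1))⁻¹) := by
      rw [Finset.sum_sub_distrib, Finset.sum_const, nsmul_eq_mul, Finset.card_range]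
    have e2 : ∑ k ∈ Finset.range N, (fB (0, (τ (k+1))⁻¹) - c)
        = (∑ k ∈ Finset.range N, fB (0, (τ (k+1))⁻¹)) - N * c := by
      rw [Finset.sum_sub_distrib, Finset.sum_const, nsmul_eq_mul, Finset.card_range]
    rw [e1, e2]
    ring

end PATH

/-! Clamping to the box -/

def clampPt : ℝ × ℝ → ℝ × ℝ := fun y => (max 0 (min y.1 1), max 0 y.2)

lemma clampPt_continuous : Continuous clampPt :=
  (continuous_const.max (continuous_fst.min continuous_const)).prodMk
    (continuous_const.max continuous_snd)

lemma clampPt_mem (y : ℝ × ℝ) : clampPt y ∈ box1 := by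
  refine ⟨⟨le_max_left 0 _, ?_⟩, mem_Ici.2 (le_max_left 0 _)⟩
  show max 0 (min y.1 1) ≤ 1
  rw [max_le_iff]
  exact ⟨zero_le_one, min_le_right _ _⟩

lemma clampPt_eq {y : ℝ × ℝ} (hy : y ∈ box1) : clampPt y = y := by
  obtain ⟨⟨h1, h2⟩, h3⟩ := hy
  show (max 0 (min y.1 1), max 0 y.2) = y
  rw [min_eq_left h2, max_eq_right h1, max_eq_right h3]

lemma boxify_continuous {f : ℝ × ℝ → ℝ} (hf : ContinuousOn f box1) :
    Continuous (fun y => f (clampPt y)) :=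
  hf.comp_continuous clampPt_continuous clampPt_mem

lemma boxify_eq {f : ℝ × ℝ → ℝ} {y : ℝ × ℝ} (hy : y ∈ box1) : f (clampPt y) = f y := by
  rw [clampPt_eq hy]

lemma boxify_bound {f : ℝ × ℝ → ℝ} {B : ℝ} (hfb : ∀ x ∈ box1, |f x| ≤ B) (y : ℝ × ℝ) :
    |f (clampPt y)| ≤ B := hfb _ (clampPt_mem y)

lemma box1_nonneg_bound {f : ℝ × ℝ → ℝ} {B : ℝ} (hfb : ∀ x ∈ box1, |f x| ≤ B) : 0 ≤ B :=
  le_trans (abs_nonneg _) (hfb (0,0) (by simp [box1]))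

section MAIN
variable {Ω' : Type} [MeasurableSpace Ω'] {Pr : Measure Ω'} [IsProbabilityMeasure Pr]
  {φ : Measure ℝ} {v w : ℕ → Ω' → ℝ}
  (hwm : ∀ i, Measurable (w i)) (hwp : ∀ i ω, 0 < w i ω)
  (hwmap : ∀ i, Measure.map (w i) Pr = φ)
  (hwind : iIndepFun w Pr)

include hwm hwmap in
lemma integral_comp_w {G : ℝ → ℝ} (hG : Measurable G) (i : ℕ) :
    ∫ ω, G (w i ω) ∂Pr = ∫ ω, G (w 1 ω) ∂Pr := by
  have h1 : ∀ j, ∫ ω, G (w j ω) ∂Pr = ∫ y, G y ∂φ := fun j => by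
    rw [← hwmap j, integral_map (hwm j).aemeasurable hG.aestronglyMeasurable]
  rw [h1 i, h1 1]

include hwm hwp hwmap hwind in
lemma integral_Jpath_zero {fB : ℝ × ℝ → ℝ} (hfB : Continuous fB) {B : ℝ}
    (hB : ∀ y, |fB y| ≤ B)
    {c : ℝ} (hc : c = ∫ ω, fB (0, w 1 ω) ∂Pr)
    {q p t : ℝ} (hp : 0 ≤ p) (hbdy : fB (1,p) = c)
    (hJint : Integrable (fun ω => Jpath fB c q p t (tauOf w ω)) Pr) :
    ∫ ω, Jpath fB c q p t (tauOf w ω) ∂Pr = 0 := by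
  by_cases hT : T0 q p ≤ t
  case neg =>
    have : ∀ ω : Ω', Jpath fB c q p t (tauOf w ω) = 0 := fun ω => Jpath_neg hT
    simp [this]
  case pos =>
    set u := t - T0 q p with hu
    have hu0 : 0 ≤ u := by rw [hu]; linarith
    set gk : ℕ → Ω' → ℝ := fun k ω =>
      ((fun y => fB (0, y) - c) (w (k+1) ω)) *
        (if Sn (tauOf w ω) k ≤ u then (1:ℝ) else 0) with hgk
    have hae := ae_tendsto_Sn hwm hwp hwmap hwind
    have hJ_eq : ∀ᵐ ω ∂Pr, Jpath fB c q p t (tauOf w ω)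
        = (∑' k, gk k ω) + (c - fB (1,p)) := by
      filter_upwards [hae] with ω hω
      have hωG : ω ∈ OmegaG w := hω
      rw [Jpath_pos hT]
      congr 1
      set N := Nt (tauOf w ω) u with hN
      have hsupp : ∀ k ∉ Finset.range (N+1), gk k ω = 0 := by
        intro k hk
        rw [Finset.mem_range, not_lt] at hk
        have hgt : u < Sn (tauOf w ω) k := by
          have h1 : u < Sn (tauOf w ω) (N+1) := Nt_lt_succ (tau_pos hwp ω) hωG u
          exact lt_of_lt_of_le h1 ((Sn_strictMono (tau_pos hwp ω)).monotone hk)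
        simp only [hgk]
        rw [if_neg (not_le.2 hgt), mul_zero]
      rw [tsum_eq_sum hsupp]
      apply Finset.sum_congr rfl
      intro k hk
      rw [Finset.mem_range, Nat.lt_add_one_iff] at hk
      have hle : Sn (tauOf w ω) k ≤ u :=
        le_trans ((Sn_strictMono (tau_pos hwp ω)).monotone hk)
          (Nt_le (tau_pos hwp ω) hωG hu0)
      simp only [hgk]
      rw [if_pos hle, mul_one]
      have hval : (tauOf w ω (k+1))⁻¹ = w (k+1) ω := by
        simp [tauOf]
      rw [hval]
    rw [integral_congr_ae hJ_eq]
    have hGm : Measurable (fun y : ℝ => fB (0, y) - c) :=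
      (hfB.measurable.comp (measurable_const.prodMk measurable_id)).sub measurable_const
    have hmeasg : ∀ k, AEStronglyMeasurable (gk k) Pr := by
      intro k
      apply Measurable.aestronglyMeasurable
      apply Measurable.mul
      · exact hGm.comp (hwm (k+1))
      · exact Measurable.ite (measurableSet_le (SnW_measurable hwm k) measurable_const)
          measurable_const measurable_const
    have hsum : ∑' k, ∫⁻ ω, ‖gk k ω‖₊ ∂Pr ≠ ⊤ := by
      have hbndk : ∀ k, ∫⁻ ω, ‖gk k ω‖₊ ∂Pr
          ≤ ENNReal.ofReal (B + |c|) * Pr {ω' | Sn (tauOf w ω') k ≤ u} := by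
        intro k
        have hptw : ∀ ω, (‖gk k ω‖₊ : ℝ≥0∞)
            ≤ ({ω' | Sn (tauOf w ω') k ≤ u}).indicator
              (fun _ => ENNReal.ofReal (B + |c|)) ω := by
          intro ω
          by_cases hω : Sn (tauOf w ω) k ≤ u
          · rw [Set.indicator_of_mem (show ω ∈ {ω' | Sn (tauOf w ω') k ≤ u} from hω)]
            simp only [hgk]
            rw [if_pos hω, mul_one]
            rw [show ∀ x : ℝ, ((‖x‖₊ : ℝ≥0∞)) = ENNReal.ofReal ‖x‖ from fun x => (ofReal_norm x).symm]
            apply ENNReal.ofReal_le_ofReal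
            rw [Real.norm_eq_abs]
            calc |fB (0, w (k+1) ω) - c| ≤ |fB (0, w (k+1) ω)| + |c| := abs_sub _ _
              _ ≤ B + |c| := by have := hB (0, w (k+1) ω); linarith
          · rw [Set.indicator_of_notMem (show ω ∉ {ω' | Sn (tauOf w ω') k ≤ u} from hω)]
            simp only [hgk]
            rw [if_neg hω, mul_zero]
            simp
        calc ∫⁻ ω, ‖gk k ω‖₊ ∂Pr
            ≤ ∫⁻ ω, ({ω' | Sn (tauOf w ω') k ≤ u}).indicator
                (fun _ => ENNReal.ofReal (B + |c|)) ω ∂Pr := lintegral_mono hptw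
          _ = ENNReal.ofReal (B + |c|) * Pr {ω' | Sn (tauOf w ω') k ≤ u} := by
              rw [lintegral_indicator (measurableSet_le (SnW_measurable hwm k)
                measurable_const)]
              simp [Measure.restrict_apply MeasurableSet.univ]
      have h2 : ∑' k, ∫⁻ ω, ‖gk k ω‖₊ ∂Pr
          ≤ ENNReal.ofReal (B + |c|) * ∑' k, Pr {ω' | Sn (tauOf w ω') k ≤ u} := by
        rw [← ENNReal.tsum_mul_left]
        exact ENNReal.tsum_le_tsum hbndk
      refine ne_top_of_le_ne_top ?_ h2
      exact ENNReal.mul_ne_top ENNReal.ofReal_ne_top (chernoff_tsum hwm hwp hwmap hwind u)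
    have hints : Integrable (fun ω => ∑' k, gk k ω) Pr := by
      have h3 := (hJint.congr hJ_eq).sub (integrable_const (c - fB (1,p)))
      apply h3.congr
      filter_upwards with ω
      simp only [Pi.sub_apply]
      ring
    rw [integral_add hints (integrable_const _)]
    have hterm : ∀ k, ∫ ω, gk k ω ∂Pr = 0 := by
      intro k
      have hGb : ∀ y : ℝ, |fB (0, y) - c| ≤ B + |c| := by
        intro y
        calc |fB (0, y) - c| ≤ |fB (0, y)| + |c| := abs_sub _ _
          _ ≤ B + |c| := by have := hB (0, y); linarith
      have hif := indep_factor hwm hwind k u (h := fun y => fB (0, y) - c) hGm (B + |c|) hGb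
      simp only [hgk]
      rw [hif]
      have hint1 : Integrable (fun ω => fB (0, w 1 ω)) Pr :=
        integrable_of_bounded_meas ((hfB.measurable.comp
          (measurable_const.prodMk (hwm 1))).aestronglyMeasurable) B
          (Filter.Eventually.of_forall fun ω => hB _)
      have h4 := integral_comp_w hwm hwmap (G := fun y => fB (0, y) - c) hGm (k+1)
      have h5 : ∫ ω, (fun y => fB (0, y) - c) (w 1 ω) ∂Pr = 0 := by
        show ∫ ω, (fB (0, w 1 ω) - c) ∂Pr = 0
        rw [integral_sub hint1 (integrable_const c), integral_const, hc]
        simp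
      rw [h4, h5, zero_mul]
    rw [integral_tsum hmeasg hsum]
    simp [hterm, integral_const, hbdy]

include hwm hwp hwmap hwind in
theorem reverse_witness
    (hvw : ∀ᵐ ω ∂Pr, ∀ i, v i ω = w i ω)
    {f : ℝ × ℝ → ℝ} (hfc : ContinuousOn f box1) {B : ℝ} (hfb : ∀ x ∈ box1, |f x| ≤ B)
    (hdiff : ∀ x ∈ box1, 0 < x.2 →
      DifferentiableWithinAt ℝ (fun q => f (q, x.2)) (Icc (0:ℝ) 1) x.1)
    (hgc : ContinuousOn (genForm f) box1) {Bg : ℝ}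
    (hgb : ∀ x ∈ box1, |genForm f x| ≤ Bg)
    (hbdyc : ∀ p' : ℝ, 0 ≤ p' → f (1, p') = ∫ ω, f (0, w 1 ω) ∂Pr) :
    ∀ t : ℝ, 0 ≤ t → ∀ x ∈ box1,
      Pop Pr v f t x = f x + ∫ s in (0:ℝ)..t, Pop Pr v (genForm f) s x := by
  intro t ht x hx
  obtain ⟨q, p⟩ := x
  obtain ⟨⟨hq0, hq1⟩, hp⟩ := hx
  simp only [mem_Icc, mem_Ici] at hq0 hq1 hp
  have hqp : (q, p) ∈ box1 := ⟨⟨hq0, hq1⟩, hp⟩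
  -- boxed versions
  set fB : ℝ × ℝ → ℝ := fun y => f (clampPt y) with hfBdef
  set DB : ℝ × ℝ → ℝ := fun y => genForm f (clampPt y) with hDBdef
  have hfBc : Continuous fB := boxify_continuous hfc
  have hDBc : Continuous DB := boxify_continuous hgc
  have hfBeq : ∀ y ∈ box1, fB y = f y := by
    intro y hy
    show f (clampPt y) = f y
    exact boxify_eq hy
  have hDBeq : ∀ y ∈ box1, DB y = genForm f y := by
    intro y hy
    show genForm f (clampPt y) = genForm f y
    exact boxify_eq hy
  have hfBb : ∀ y, |fB y| ≤ B := boxify_bound hfb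
  have hDBb : ∀ y, |DB y| ≤ Bg := boxify_bound hgb
  set c : ℝ := ∫ ω, f (0, w 1 ω) ∂Pr with hcdef
  have hcB : c = ∫ ω, fB (0, w 1 ω) ∂Pr := by
    rw [hcdef]
    apply integral_congr_ae
    filter_upwards with ω
    exact (hfBeq (0, w 1 ω) ⟨⟨le_refl 0, zero_le_one⟩, (hwp 1 ω).le⟩).symm
  have hbdyB : ∀ p' : ℝ, 0 ≤ p' → fB (1, p') = c := by
    intro p' hp'
    rw [hfBeq (1, p') ⟨⟨zero_le_one, le_refl 1⟩, hp'⟩]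
    exact hbdyc p' hp'
  -- easy case : p = 0 and q < 1
  by_cases hcase : 0 < p ∨ q = 1
  case neg =>
    push_neg at hcase
    obtain ⟨hp0, hq1'⟩ := hcase
    have hpz : p = 0 := le_antisymm hp0 hp
    subst hpz
    have hqlt : q < 1 := lt_of_le_of_ne hq1 hq1'
    have hfm : ∀ s : ℝ, ∀ τ' : ℕ → ℝ, Fmap q 0 s τ' = (q, 0) := by
      intro s τ'
      rw [Fmap_pos_branch (by rw [zero_mul]; linarith)]
      rw [zero_mul, add_zero]
    have h1 : Pop Pr v f t (q, 0) = f (q, 0) := by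
      unfold Pop
      simp only [hfm]
      rw [integral_const]
      simp
    have h2 : ∀ s : ℝ, Pop Pr v (genForm f) s (q, 0) = 0 := by
      intro s
      unfold Pop
      simp only [hfm]
      have : genForm f (q, 0) = 0 := by
        simp [genForm]
      rw [this]
      simp
    rw [h1]
    have : ∫ s in (0:ℝ)..t, Pop Pr v (genForm f) s (q, 0) = 0 := by
      simp only [h2]
      simp
    rw [this, add_zero]
  case pos =>
    -- good event
    have haeG : ∀ᵐ ω ∂Pr, (∀ i, v i ω = w i ω) ∧ ω ∈ OmegaG w :=
      hvw.and (ae_tendsto_Sn hwm hwp hwmap hwind)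
    have htau : ∀ ω : Ω', (∀ i, v i ω = w i ω) → tauOf v ω = tauOf w ω := by
      intro ω hω
      funext n
      simp [tauOf, hω n]
    -- derivative hypothesis for path_identity
    have hderB : ∀ y ∈ Ioo (0:ℝ) 1, ∀ v' : ℝ, 0 < v' →
        HasDerivAt (fun z => fB (z, v')) (DB (y, v') / v') y := by
      intro y hy v' hv'
      have hybox : (y, v') ∈ box1 := ⟨⟨hy.1.le, hy.2.le⟩, hv'.le⟩
      have hIcc : Icc (0:ℝ) 1 ∈ 𝓝 y := Icc_mem_nhds hy.1 hy.2
      have hda : DifferentiableAt ℝ (fun z => f (z, v')) y :=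
        (hdiff (y, v') hybox hv').differentiableAt hIcc
      have hDval : DB (y, v') = v' * deriv (fun z => f (z, v')) y := by
        rw [hDBeq (y, v') hybox]
        unfold genForm
        simp only
        rw [derivWithin_of_mem_nhds hIcc]
      have hd1 : HasDerivAt (fun z => f (z, v')) (DB (y, v') / v') y := by
        have := hda.hasDerivAt
        have hval : deriv (fun z => f (z, v')) y = DB (y, v') / v' := by
          rw [hDval]
          field_simp
        rwa [hval] at this
      apply hd1.congr_of_eventuallyEq
      have hnhds : Ioo (0:ℝ) 1 ∈ 𝓝 y := Ioo_mem_nhds hy.1 hy.2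
      filter_upwards [hnhds] with z hz
      exact hfBeq (z, v') ⟨⟨hz.1.le, hz.2.le⟩, hv'.le⟩
    -- identification of Pop with boxed versions
    have hPopf : Pop Pr v f t (q, p) = ∫ ω, fB (Xfull w q p (t, ω)) ∂Pr := by
      unfold Pop
      apply integral_congr_ae
      filter_upwards [haeG] with ω hω
      show f (Fmap q p t (tauOf v ω)) = fB (Xfull w q p (t, ω))
      rw [htau ω hω.1, Xfull_eq hω.2]
      exact (hfBeq _ ((Fmap_mem (tau_pos hwp ω) hω.2 hqp ht).1)).symm
    have hPopD : ∀ s : ℝ, 0 ≤ s →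
        Pop Pr v (genForm f) s (q, p) = ∫ ω, DB (Xfull w q p (s, ω)) ∂Pr := by
      intro s hs
      unfold Pop
      apply integral_congr_ae
      filter_upwards [haeG] with ω hω
      show genForm f (Fmap q p s (tauOf v ω)) = DB (Xfull w q p (s, ω))
      rw [htau ω hω.1, Xfull_eq hω.2]
      exact (hDBeq _ ((Fmap_mem (tau_pos hwp ω) hω.2 hqp hs).1)).symm
    -- product integrability
    haveI hfin : IsFiniteMeasure ((volume : Measure ℝ).restrict (Ioc 0 t)) :=
      ⟨by rw [Measure.restrict_apply_univ]; exact measure_Ioc_lt_top⟩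
    have hprodmeas : Measurable (fun z : ℝ × Ω' => DB (Xfull w q p z)) :=
      hDBc.measurable.comp (Xfull_measurable hwm hwp q p)
    have hprodint : Integrable (fun z : ℝ × Ω' => DB (Xfull w q p z))
        (((volume : Measure ℝ).restrict (Ioc 0 t)).prod Pr) := by
      refine Integrable.mono' (integrable_const Bg) hprodmeas.aestronglyMeasurable ?_
      filter_upwards with z
      rw [Real.norm_eq_abs]
      exact hDBb _
    -- pathwise identity
    have hpathae : ∀ᵐ ω ∂Pr,
        (∫ s in Ioc (0:ℝ) t, DB (Xfull w q p (s, ω)))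
          = fB (Xfull w q p (t, ω)) - f (q, p) - Jpath fB c q p t (tauOf w ω) := by
      filter_upwards [haeG] with ω hω
      have hpos := tau_pos hwp ω
      have hSω : Tendsto (Sn (tauOf w ω)) atTop atTop := hω.2
      have hpi := path_identity hpos hSω hfBc hDBc hderB hbdyB hqp hcase ht
      have hXeq : ∀ s : ℝ, DB (Xfull w q p (s, ω)) = DB (Fmap q p s (tauOf w ω)) := by
        intro s
        rw [Xfull_eq hω.2]
      have hXeqt : fB (Xfull w q p (t, ω)) = fB (Fmap q p t (tauOf w ω)) := by
        rw [Xfull_eq hω.2]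
      rw [← intervalIntegral.integral_of_le ht]
      simp only [hXeq, hXeqt]
      rw [hpi]
      rw [hfBeq (q, p) hqp]
    -- integrabilities
    have hIXt : Integrable (fun ω => fB (Xfull w q p (t, ω))) Pr := by
      refine Integrable.mono' (integrable_const B) ?_ ?_
      · exact (hfBc.measurable.comp ((Xfull_measurable hwm hwp q p).comp
          (measurable_const.prodMk measurable_id))).aestronglyMeasurable
      · filter_upwards with ω
        rw [Real.norm_eq_abs]
        exact hfBb _
    have hIpath : Integrable (fun ω => ∫ s in Ioc (0:ℝ) t, DB (Xfull w q p (s, ω))) Pr :=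
      hprodint.integral_prod_right
    have hJint : Integrable (fun ω => Jpath fB c q p t (tauOf w ω)) Pr := by
      have h6 : Integrable (fun ω => fB (Xfull w q p (t, ω)) - f (q, p)
          - ∫ s in Ioc (0:ℝ) t, DB (Xfull w q p (s, ω))) Pr :=
        (hIXt.sub (integrable_const _)).sub hIpath
      apply h6.congr
      filter_upwards [hpathae] with ω hω
      rw [hω]
      ring
    have hEJ : ∫ ω, Jpath fB c q p t (tauOf w ω) ∂Pr = 0 :=
      integral_Jpath_zero hwm hwp hwmap hwind hfBc hfBb hcB hp (hbdyB p hp) hJint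
    -- Fubini
    have hswap := integral_integral_swap (f := fun s ω => DB (Xfull w q p (s, ω)))
      (μ := (volume : Measure ℝ).restrict (Ioc 0 t)) (ν := Pr) hprodint
    -- conclude
    have hmain : ∫ ω, fB (Xfull w q p (t, ω)) ∂Pr
        = f (q, p) + ∫ ω, (∫ s in Ioc (0:ℝ) t, DB (Xfull w q p (s, ω))) ∂Pr := by
      have h7 : ∫ ω, fB (Xfull w q p (t, ω)) ∂Pr
          = ∫ ω, (f (q, p) + (∫ s in Ioc (0:ℝ) t, DB (Xfull w q p (s, ω)))
              + Jpath fB c q p t (tauOf w ω)) ∂Pr := by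
        apply integral_congr_ae
        filter_upwards [hpathae] with ω hω
        rw [hω]
        ring
      have hI1 : Integrable (fun ω => f (q, p)
          + ∫ s in Ioc (0:ℝ) t, DB (Xfull w q p (s, ω))) Pr := (integrable_const _).add hIpath
      rw [h7, integral_add hI1 hJint, hEJ, add_zero,
        integral_add (integrable_const _) hIpath, integral_const]
      simp
    rw [hPopf, hmain]
    congr 1
    rw [intervalIntegral.integral_of_le ht]
    rw [← hswap]
    apply setIntegral_congr_ae measurableSet_Ioc
    filter_upwards with s hs
    exact (hPopD s hs.1.le).symm

/-! Forward direction -/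

include hwm hwp hwmap hwind in
theorem forward_props (hvw : ∀ᵐ ω ∂Pr, ∀ i, v i ω = w i ω)
    {f g : ℝ × ℝ → ℝ} (hfc : ContinuousOn f box1) {B : ℝ} (hfb : ∀ x ∈ box1, |f x| ≤ B)
    (hgc : ContinuousOn g box1) {Bg : ℝ} (hgb : ∀ x ∈ box1, |g x| ≤ Bg)
    (heqn : ∀ t : ℝ, 0 ≤ t → ∀ x ∈ box1,
      Pop Pr v f t x = f x + ∫ s in (0:ℝ)..t, Pop Pr v g s x) :
    (∀ x ∈ box1, 0 < x.2 →
      DifferentiableWithinAt ℝ (fun z => f (z, x.2)) (Icc (0:ℝ) 1) x.1)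
    ∧ EqOn g (genForm f) box1
    ∧ ∀ p' : ℝ, 0 ≤ p' → f (1, p') = ∫ ω, f (0, w 1 ω) ∂Pr := by
  have hBg0 : 0 ≤ Bg := box1_nonneg_bound hgb
  set gB : ℝ × ℝ → ℝ := fun y => g (clampPt y) with hgBdef
  have hgBc : Continuous gB := boxify_continuous hgc
  have hgBeq : ∀ y ∈ box1, gB y = g y := by
    intro y hy
    show g (clampPt y) = g y
    exact boxify_eq hy
  set fB : ℝ × ℝ → ℝ := fun y => f (clampPt y) with hfBdef
  have hfBc : Continuous fB := boxify_continuous hfc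
  have hfBeq : ∀ y ∈ box1, fB y = f y := by
    intro y hy
    show f (clampPt y) = f y
    exact boxify_eq hy
  have haeG : ∀ᵐ ω ∂Pr, (∀ i, v i ω = w i ω) ∧ ω ∈ OmegaG w :=
    hvw.and (ae_tendsto_Sn hwm hwp hwmap hwind)
  have htau : ∀ ω : Ω', (∀ i, v i ω = w i ω) → tauOf v ω = tauOf w ω := by
    intro ω hω
    funext n
    simp [tauOf, hω n]
  -- Part A : g (q, 0) = 0 for q < 1
  have partA : ∀ q : ℝ, 0 ≤ q → q < 1 → g (q, 0) = 0 := by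
    intro q hq0 hq1
    have hx : ((q:ℝ), (0:ℝ)) ∈ box1 := ⟨⟨hq0, hq1.le⟩, by norm_num⟩
    have hfm : ∀ s : ℝ, ∀ τ' : ℕ → ℝ, Fmap q 0 s τ' = (q, 0) := by
      intro s τ'
      rw [Fmap_pos_branch (by rw [zero_mul]; linarith)]
      rw [zero_mul, add_zero]
    have h1 : Pop Pr v f 1 (q, 0) = f (q, 0) := by
      unfold Pop
      simp only [hfm]
      rw [integral_const]
      simp
    have h2 : ∀ s : ℝ, Pop Pr v g s (q, 0) = g (q, 0) := by
      intro s
      unfold Pop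
      simp only [hfm]
      rw [integral_const]
      simp
    have h3 := heqn 1 zero_le_one (q, 0) hx
    rw [h1] at h3
    simp only [h2] at h3
    rw [intervalIntegral.integral_const] at h3
    simp at h3
    linarith [h3]
  -- Part B : the key derivative identity for p' > 0
  have partB : ∀ p' : ℝ, 0 < p' →
      (∀ y ∈ Icc (0:ℝ) 1, HasDerivWithinAt (fun z => f (z, p'))
        (p'⁻¹ * gB (y, p')) (Icc (0:ℝ) 1) y) := by
    intro p' hp'
    have hx0 : ((0:ℝ), p') ∈ box1 := ⟨⟨le_refl 0, zero_le_one⟩, hp'.le⟩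
    -- the equation below T0
    have hstep : ∀ t' : ℝ, 0 ≤ t' → p' * t' < 1 →
        f (p' * t', p') = f (0, p') + p'⁻¹ * ∫ u in (0:ℝ)..(p' * t'), gB (u, p') := by
      intro t' ht' hlt
      have hPopf : Pop Pr v f t' (0, p') = f (p' * t', p') := by
        unfold Pop
        have : ∀ τ' : ℕ → ℝ, Fmap 0 p' t' τ' = (p' * t', p') := by
          intro τ'
          rw [Fmap_pos_branch (by rw [sub_zero]; exact hlt)]
          rw [zero_add]
        simp only [this]
        rw [integral_const]
        simp
      have hPopg : ∀ s ∈ Icc (0:ℝ) t', Pop Pr v g s (0, p') = gB (p' * s, p') := by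
        intro s hs
        unfold Pop
        have hlt2 : p' * s < 1 := by
          have : p' * s ≤ p' * t' := mul_le_mul_of_nonneg_left hs.2 hp'.le
          linarith
        have : ∀ τ' : ℕ → ℝ, Fmap 0 p' s τ' = (p' * s, p') := by
          intro τ'
          rw [Fmap_pos_branch (by rw [sub_zero]; exact hlt2)]
          rw [zero_add]
        simp only [this]
        rw [integral_const]
        have hmem : ((p' * s : ℝ), p') ∈ box1 :=
          ⟨⟨mul_nonneg hp'.le hs.1, hlt2.le⟩, hp'.le⟩
        rw [← hgBeq _ hmem]
        simp
      have h3 := heqn t' ht' (0, p') hx0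
      rw [hPopf] at h3
      have h4 : ∫ s in (0:ℝ)..t', Pop Pr v g s (0, p')
          = ∫ s in (0:ℝ)..t', gB (p' * s, p') := by
        apply intervalIntegral.integral_congr
        intro s hs
        rw [uIcc_of_le ht'] at hs
        exact hPopg s hs
      rw [h4] at h3
      have h5 : ∫ s in (0:ℝ)..t', gB (p' * s, p')
          = p'⁻¹ * ∫ u in (0:ℝ)..(p' * t'), gB (u, p') := by
        have := intervalIntegral.integral_comp_mul_left (a := (0:ℝ)) (b := t')
          (fun u => gB (u, p')) (ne_of_gt hp')
        rw [this]
        rw [mul_zero]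
        simp [smul_eq_mul]
      rw [h5] at h3
      exact h3
    -- Φ and its derivative
    set Φ : ℝ → ℝ := fun y => f (0, p') + p'⁻¹ * ∫ u in (0:ℝ)..y, gB (u, p') with hΦdef
    have hgslice : Continuous (fun u : ℝ => gB (u, p')) :=
      hgBc.comp (continuous_id.prodMk continuous_const)
    have hΦder : ∀ y : ℝ, HasDerivAt Φ (p'⁻¹ * gB (y, p')) y := by
      intro y
      have hprim : HasDerivAt (fun z => ∫ u in (0:ℝ)..z, gB (u, p')) (gB (y, p')) y :=
        (hgslice.integral_hasStrictDerivAt 0 y).hasDerivAt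
      exact (hprim.const_mul p'⁻¹).const_add (f (0, p'))
    have hΦcont : Continuous Φ :=
      continuous_iff_continuousAt.2 fun y => (hΦder y).continuousAt
    -- f = Φ on Ico
    have h1y : ∀ y ∈ Ico (0:ℝ) 1, f (y, p') = Φ y := by
      intro y hy
      have := hstep (y / p') (div_nonneg hy.1 hp'.le)
        (by rw [mul_div_cancel₀ _ (ne_of_gt hp')]; exact hy.2)
      rw [mul_div_cancel₀ _ (ne_of_gt hp')] at this
      exact this
    -- f = Φ at 1
    have h11 : f (1, p') = Φ 1 := by
      have hclos : (1:ℝ) ∈ closure (Ico (0:ℝ) 1) := by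
        rw [closure_Ico (zero_ne_one)]
        exact ⟨zero_le_one, le_refl 1⟩
      have hne : (𝓝[Ico (0:ℝ) 1] 1).NeBot := mem_closure_iff_nhdsWithin_neBot.1 hclos
      have hslice_cont : ContinuousOn (fun y => f (y, p')) (Icc (0:ℝ) 1) := by
        apply hfc.comp (continuous_id.prodMk continuous_const).continuousOn
        intro y hy
        exact ⟨hy, mem_Ici.2 hp'.le⟩
      have t1 : Tendsto (fun y => f (y, p')) (𝓝[Ico (0:ℝ) 1] 1) (𝓝 (f (1, p'))) :=
        (hslice_cont 1 ⟨zero_le_one, le_refl 1⟩).mono_left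
          (nhdsWithin_mono _ Ico_subset_Icc_self)
      have t2 : Tendsto Φ (𝓝[Ico (0:ℝ) 1] 1) (𝓝 (Φ 1)) :=
        (hΦcont.tendsto 1).mono_left nhdsWithin_le_nhds
      have hEq : Φ =ᶠ[𝓝[Ico (0:ℝ) 1] 1] (fun y => f (y, p')) := by
        filter_upwards [eventually_mem_nhdsWithin] with y hy
        exact (h1y y hy).symm
      exact tendsto_nhds_unique t1 (t2.congr' hEq)
    have hkey : ∀ y ∈ Icc (0:ℝ) 1, f (y, p') = Φ y := by
      intro y hy
      rcases eq_or_lt_of_le hy.2 with h | h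
      · rw [h]; exact h11
      · exact h1y y ⟨hy.1, h⟩
    intro y hy
    exact ((hΦder y).hasDerivWithinAt).congr (fun z hz => hkey z hz) (hkey y hy)
  -- differentiability conjunct
  have hdiff : ∀ x ∈ box1, 0 < x.2 →
      DifferentiableWithinAt ℝ (fun z => f (z, x.2)) (Icc (0:ℝ) 1) x.1 := by
    intro x hx hx2
    exact (partB x.2 hx2 x.1 hx.1).differentiableWithinAt
  -- EqOn conjunct
  have hEqOn : EqOn g (genForm f) box1 := by
    intro x hx
    obtain ⟨q, p⟩ := x
    obtain ⟨⟨hq0, hq1⟩, hp⟩ := hx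
    simp only [mem_Icc, mem_Ici] at hq0 hq1 hp
    rcases eq_or_lt_of_le hp with hp0 | hp0
    · -- p = 0
      have hgen0 : genForm f (q, (0:ℝ)) = 0 := by
        simp [genForm]
      rw [← hp0, hgen0]
      rcases eq_or_lt_of_le hq1 with hq1' | hq1'
      · -- q = 1 : continuity argument
        subst hq1'
        have hcw : ContinuousWithinAt g box1 ((1:ℝ), (0:ℝ)) := hgc _ ⟨⟨zero_le_one, le_refl 1⟩, by norm_num⟩
        set seq : ℕ → ℝ × ℝ := fun k => ((1 - ((k:ℝ)+2)⁻¹ : ℝ), (0:ℝ)) with hseq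
        have hmem : ∀ k, seq k ∈ box1 := by
          intro k
          have h2 : (0:ℝ) < (k:ℝ) + 2 := by positivity
          have h3 : ((k:ℝ)+2)⁻¹ ≤ 1 := by
            rw [inv_le_one_iff₀]
            right; linarith
          refine ⟨⟨by simp only [hseq]; linarith [inv_pos.2 h2],
            by simp only [hseq]; linarith [inv_pos.2 h2]⟩, by simp only [hseq]; norm_num⟩
        have hlt : ∀ k, (seq k).1 < 1 := by
          intro k
          have h2 : (0:ℝ) < (k:ℝ) + 2 := by positivity
          simp only [hseq]
          linarith [inv_pos.2 h2]
        have htend : Tendsto seq atTop (𝓝[box1] ((1:ℝ), (0:ℝ))) := by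
          rw [tendsto_nhdsWithin_iff]
          constructor
          · rw [hseq]
            have : Tendsto (fun k : ℕ => ((k:ℝ)+2)⁻¹) atTop (𝓝 0) := by
              apply tendsto_inv_atTop_zero.comp
              apply tendsto_atTop_add_const_right
              exact tendsto_natCast_atTop_atTop
            have h4 : Tendsto (fun k : ℕ => (1 - ((k:ℝ)+2)⁻¹ : ℝ)) atTop (𝓝 1) := by
              have := (tendsto_const_nhds (x := (1:ℝ)) (f := atTop)).sub this
              simpa using this
            exact h4.prodMk_nhds tendsto_const_nhds
          · exact Filter.Eventually.of_forall hmem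
        have hgseq : Tendsto (fun k => g (seq k)) atTop (𝓝 (g (1, 0))) :=
          hcw.tendsto.comp htend
        have hzero : ∀ k, g (seq k) = 0 := by
          intro k
          have := partA (seq k).1 (hmem k).1.1 (hlt k)
          simpa [hseq] using this
        rw [show (fun k => g (seq k)) = (fun _ : ℕ => (0:ℝ)) from funext hzero] at hgseq
        exact tendsto_nhds_unique hgseq tendsto_const_nhds
      · -- q < 1
        exact partA q hq0 hq1'
    · -- p > 0
      have hDW := partB p hp0 q ⟨hq0, hq1⟩
      have hderivW : derivWithin (fun z => f (z, p)) (Icc (0:ℝ) 1) q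
          = p⁻¹ * gB (q, p) := hDW.derivWithin (uniqueDiffOn_Icc zero_lt_one q ⟨hq0, hq1⟩)
      show g (q, p) = genForm f (q, p)
      unfold genForm
      simp only
      rw [hderivW, ← mul_assoc, mul_inv_cancel₀ (ne_of_gt hp0), one_mul]
      exact (hgBeq (q, p) ⟨⟨hq0, hq1⟩, hp⟩).symm
  refine ⟨hdiff, hEqOn, ?_⟩
  -- Part C : boundary condition
  intro p' hp'
  have hx1 : ((1:ℝ), p') ∈ box1 := ⟨⟨zero_le_one, le_refl 1⟩, hp'⟩
  set tseq : ℕ → ℝ := fun n => ((n:ℝ)+1)⁻¹ with htseq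
  have htpos : ∀ n, 0 < tseq n := by
    intro n
    apply inv_pos.2
    positivity
  have htzero : Tendsto tseq atTop (𝓝 0) := by
    apply tendsto_inv_atTop_zero.comp
    apply tendsto_atTop_add_const_right
    exact tendsto_natCast_atTop_atTop
  -- bound on Pop g
  have hb : ∀ s : ℝ, 0 ≤ s → |Pop Pr v g s (1, p')| ≤ Bg := by
    intro s hs
    unfold Pop
    rw [← Real.norm_eq_abs]
    have := norm_integral_le_of_norm_le_const (μ := Pr)
      (f := fun ω => g (Fmap 1 p' s (tauOf v ω))) (C := Bg) ?_
    · simpa using this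
    · filter_upwards [haeG] with ω hω
      rw [Real.norm_eq_abs, htau ω hω.1]
      exact hgb _ (Fmap_mem (tau_pos hwp ω) hω.2 hx1 hs).1
  -- first limit
  have htend1 : Tendsto (fun n => Pop Pr v f (tseq n) (1, p')) atTop (𝓝 (f (1, p'))) := by
    have hdiffb : ∀ n, ‖Pop Pr v f (tseq n) (1, p') - f (1, p')‖ ≤ Bg * tseq n := by
      intro n
      have h3 := heqn (tseq n) (htpos n).le (1, p') hx1
      rw [h3]
      simp only [add_sub_cancel_left]
      have := intervalIntegral.norm_integral_le_of_norm_le_const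
        (f := fun s => Pop Pr v g s (1, p')) (C := Bg) (a := 0) (b := tseq n) ?_
      · rw [sub_zero, abs_of_pos (htpos n)] at this
        exact this
      · intro s hs
        rw [uIoc_of_le (htpos n).le] at hs
        rw [Real.norm_eq_abs]
        exact hb s hs.1.le
    have hz : Tendsto (fun n => Pop Pr v f (tseq n) (1, p') - f (1, p')) atTop (𝓝 0) := by
      apply squeeze_zero_norm hdiffb
      have := htzero.const_mul Bg
      simpa using this
    have := hz.add_const (f (1, p'))
    simpa using this
  -- second limit
  have htend2 : Tendsto (fun n => Pop Pr v f (tseq n) (1, p')) atTop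
      (𝓝 (∫ ω, f (0, w 1 ω) ∂Pr)) := by
    have hPop_eq : ∀ n, Pop Pr v f (tseq n) (1, p')
        = ∫ ω, f (Fmap 1 p' (tseq n) (tauOf v ω)) ∂Pr := fun n => rfl
    simp only [hPop_eq]
    apply tendsto_integral_of_dominated_convergence (bound := fun _ => B)
    · intro n
      apply AEStronglyMeasurable.congr
        (f := fun ω => fB (Xfull w 1 p' (tseq n, ω)))
      · exact (hfBc.measurable.comp ((Xfull_measurable hwm hwp 1 p').comp
          (measurable_const.prodMk measurable_id))).aestronglyMeasurable
      · filter_upwards [haeG] with ω hω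
        rw [htau ω hω.1] at *
        rw [Xfull_eq hω.2]
        exact hfBeq _ (Fmap_mem (tau_pos hwp ω) hω.2 hx1 (htpos n).le).1
    · exact integrable_const B
    · intro n
      filter_upwards [haeG] with ω hω
      rw [Real.norm_eq_abs, htau ω hω.1]
      exact hfb _ (Fmap_mem (tau_pos hwp ω) hω.2 hx1 (htpos n).le).1
    · filter_upwards [haeG] with ω hω
      have hτ := htau ω hω.1
      have hpos := tau_pos hwp ω
      have hτ1 : 0 < tauOf w ω 1 := hpos 1
      -- identify the trajectory for small times
      have hev : ∀ᶠ n in atTop, f (Fmap 1 p' (tseq n) (tauOf v ω))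
          = f (tseq n / tauOf w ω 1, w 1 ω) := by
        have hev1 : ∀ᶠ n in atTop, tseq n < tauOf w ω 1 :=
          htzero.eventually_lt_const hτ1
        filter_upwards [hev1] with n hn
        rw [hτ]
        have hbr : ¬ p' * tseq n < 1 - 1 := by
          rw [sub_self, not_lt]
          exact mul_nonneg hp' (htpos n).le
        rw [Fmap_neg_branch hbr]
        have hT0 : T0 1 p' = 0 := by simp [T0]
        rw [hT0, sub_zero]
        have hS1 : Sn (tauOf w ω) 1 = tauOf w ω 1 := by
          unfold Sn
          rw [Finset.sum_range_one]
        have := trajU_eq hpos hω.2 (u := tseq n) (n := 0) (Or.inr rfl)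
          (by rw [hS1]; exact hn)
        rw [this]
        have hS0 : Sn (tauOf w ω) 0 = 0 := rfl
        rw [hS0, sub_zero]
        congr 1
        simp [tauOf]
      -- convergence of the simplified expression
      have hcw : ContinuousWithinAt f box1 ((0:ℝ), w 1 ω) :=
        hfc _ ⟨⟨le_refl 0, zero_le_one⟩, (hwp 1 ω).le⟩
      have hpath : Tendsto (fun n => ((tseq n / tauOf w ω 1 : ℝ), w 1 ω)) atTop
          (𝓝[box1] ((0:ℝ), w 1 ω)) := by
        rw [tendsto_nhdsWithin_iff]
        constructor
        · have h8 : Tendsto (fun n => tseq n / tauOf w ω 1) atTop (𝓝 0) := by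
            have := htzero.div_const (tauOf w ω 1)
            simpa using this
          exact h8.prodMk_nhds tendsto_const_nhds
        · have hev1 : ∀ᶠ n in atTop, tseq n < tauOf w ω 1 :=
            htzero.eventually_lt_const hτ1
          filter_upwards [hev1] with n hn
          refine ⟨⟨div_nonneg (htpos n).le hτ1.le, ?_⟩, (hwp 1 ω).le⟩
          rw [div_le_one hτ1]
          exact hn.le
      have := (hcw.tendsto.comp hpath)
      apply Tendsto.congr' ?_ this
      filter_upwards [hev] with n hn
      exact hn.symm
  exact tendsto_nhds_unique htend1 htend2

include hwm hwp hwmap in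
lemma boundary_convert [IsProbabilityMeasure φ] (hφpos : φ (Ioi (0:ℝ)) = 1)
    {f : ℝ × ℝ → ℝ} (hfc : ContinuousOn f box1) :
    ∫ τ', f (0, τ'⁻¹) ∂(Measure.map (fun u : ℝ => u⁻¹) φ) = ∫ ω, f (0, w 1 ω) ∂Pr := by
  set fB : ℝ × ℝ → ℝ := fun y => f (clampPt y) with hfBdef
  have hfBc : Continuous fB := boxify_continuous hfc
  have hfBeq : ∀ y ∈ box1, fB y = f y := by
    intro y hy
    show f (clampPt y) = f y
    exact boxify_eq hy
  have hcompl : φ ((Ioi (0:ℝ))ᶜ) = 0 := by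
    have h1 := measure_compl (measurableSet_Ioi (a := (0:ℝ))) (measure_ne_top φ _)
    rw [hφpos, measure_univ] at h1
    simpa using h1
  have hφae : ∀ᵐ u ∂φ, 0 < u := by
    rw [ae_iff]
    have : {u : ℝ | ¬ 0 < u} = (Ioi (0:ℝ))ᶜ := by
      ext u; simp
    rw [this]
    exact hcompl
  have hR : ∫ ω, f (0, w 1 ω) ∂Pr = ∫ y, fB (0, y) ∂φ := by
    have h1 : ∫ ω, f (0, w 1 ω) ∂Pr = ∫ ω, fB (0, w 1 ω) ∂Pr := by
      apply integral_congr_ae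
      filter_upwards with ω
      exact (hfBeq (0, w 1 ω) ⟨⟨le_refl 0, zero_le_one⟩, (hwp 1 ω).le⟩).symm
    have hm1 : AEStronglyMeasurable (fun y : ℝ => fB (0, y)) (Measure.map (w 1) Pr) :=
      ((hfBc.comp (continuous_const.prodMk continuous_id)).measurable).aestronglyMeasurable
    rw [h1, ← hwmap 1]
    exact (integral_map (hwm 1).aemeasurable hm1).symm
  have hmapae : ∀ᵐ τ' ∂(Measure.map (fun u : ℝ => u⁻¹) φ), 0 < τ' := by
    rw [ae_iff]
    have hsub : {τ' : ℝ | ¬ 0 < τ'} = Iic 0 := by ext x; simp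
    rw [hsub, Measure.map_apply measurable_inv measurableSet_Iic]
    refine measure_mono_null ?_ hcompl
    intro u hu
    simp only [mem_preimage, mem_Iic] at hu
    simp only [mem_compl_iff, mem_Ioi, not_lt]
    by_contra h
    push_neg at h
    have := inv_pos.2 h
    linarith
  have hL1 : ∫ τ', f (0, τ'⁻¹) ∂(Measure.map (fun u : ℝ => u⁻¹) φ)
      = ∫ τ', fB (0, τ'⁻¹) ∂(Measure.map (fun u : ℝ => u⁻¹) φ) := by
    apply integral_congr_ae
    filter_upwards [hmapae] with τ' hτ'
    exact (hfBeq (0, τ'⁻¹) ⟨⟨le_refl 0, zero_le_one⟩, (inv_pos.2 hτ').le⟩).symm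
  have hL2 : ∫ τ', fB (0, τ'⁻¹) ∂(Measure.map (fun u : ℝ => u⁻¹) φ)
      = ∫ u, fB (0, (u⁻¹)⁻¹) ∂φ :=
    integral_map measurable_inv.aemeasurable
      ((hfBc.measurable.comp (measurable_const.prodMk measurable_inv)).aestronglyMeasurable)
  have hL3 : (fun u : ℝ => fB (0, (u⁻¹)⁻¹)) = fun u : ℝ => fB (0, u) := by
    funext u
    rw [inv_inv]
  rw [hL1, hL2, hL3, hR]

end MAIN

/-- Characterization of the generator: a bounded continuous
`f : [0,1] × [0,∞) → ℝ` belongs to `D(L)` if and only if `(q,p) ↦ p ∂f/∂q` is bounded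
continuous (with `f` differentiable in `q` for `p > 0`) and `f` satisfies the boundary
condition `f(1,p) = ∫ f(0,1/τ) ψ(dτ)`; in that case `L f = p ∂f/∂q`. -/
theorem generator_characterization (φ : Measure ℝ) (hφ : IsLawOnPos φ)
    {Ω' : Type} [MeasurableSpace Ω'] (Pr : Measure Ω') [IsProbabilityMeasure Pr]
    (v : ℕ → Ω' → ℝ) (hv : IsIIDSpeeds Pr v φ)
    (f : ℝ × ℝ → ℝ) (hfc : ContinuousOn f box1) (hfb : ∃ B, ∀ x ∈ box1, |f x| ≤ B) :
    ((∃ g, IsGenWitness Pr v f g) ↔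
      ((∀ x ∈ box1, 0 < x.2 →
          DifferentiableWithinAt ℝ (fun q => f (q, x.2)) (Icc (0:ℝ) 1) x.1) ∧
        ContinuousOn (genForm f) box1 ∧ (∃ B, ∀ x ∈ box1, |genForm f x| ≤ B) ∧
        ∀ p : ℝ, 0 ≤ p →
          f (1, p) = ∫ τ, f (0, τ⁻¹) ∂(Measure.map (fun u : ℝ => u⁻¹) φ))) ∧
    ∀ g, IsGenWitness Pr v f g → EqOn g (genForm f) box1 := by
  obtain ⟨hφprob, hφpos⟩ := hφ
  haveI := hφprob
  obtain ⟨hvind, hvmap, hvpos⟩ := hv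
  obtain ⟨w, hwm, hwp, hwmap, hwind, hvw⟩ := exists_nice_version hvind hvmap hvpos
  obtain ⟨B, hfb⟩ := hfb
  have hbc := boundary_convert hwm hwp hwmap hφpos hfc
  constructor
  · constructor
    · rintro ⟨g, hgc, ⟨Bg, hgb⟩, heqn⟩
      obtain ⟨hdiff, hEqOn, hbdy⟩ := forward_props hwm hwp hwmap hwind hvw hfc hfb hgc hgb
        (fun t ht => heqn t ht)
      refine ⟨hdiff, hgc.congr hEqOn.symm, ⟨Bg, ?_⟩, ?_⟩
      · intro x hx
        rw [← hEqOn hx]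
        exact hgb x hx
      · intro p hp
        rw [hbc]
        exact hbdy p hp
    · rintro ⟨hdiff, hgc, ⟨Bg, hgb⟩, hbdy⟩
      refine ⟨genForm f, hgc, ⟨Bg, hgb⟩, ?_⟩
      intro t ht x hx
      exact reverse_witness hwm hwp hwmap hwind hvw hfc hfb hdiff hgc hgb
        (fun p' hp' => by rw [← hbc]; exact hbdy p' hp') t ht x hx
  · intro g hgw
    obtain ⟨hgc, ⟨Bg, hgb⟩, heqn⟩ := hgw
    exact (forward_props hwm hwp hwmap hwind hvw hfc hfb hgc hgb
      (fun t ht => heqn t ht)).2.1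

end RSP
end
end
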